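/- arXiv:1505.02061 — 2 statements merged into one kernel-verified Lean document; each statement's English description precedes it below -/
import Mathlib

section
/- Let K ∈ ℝ, N ∈ (1,∞), let I ⊆ ℝ be an interval and let h : I → [0,∞) satisfy, for all t₀ < t₁ in I and all s ∈ [0,1], the weak (K,N)-concavity inequality h((1−s)t₀ + s t₁)^{1/(N−1)} ≥ σ_{K,N−1}^{(1−s)}(t₁−t₀)·h(t₀)^{1/(N−1)} + σ_{K,N−1}^{(s)}(t₁−t₀)·h(t₁)^{1/(N−1)}. Then the set {t ∈ I : h(t) > 0} is convex (an interval), and h is locally Lipschitz continuous on the interior of {t ∈ I : h(t) > 0}. -/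
noncomputable section

open MeasureTheory Set Filter Metric Topology ENNReal NNReal

namespace CDMMS

variable {X : Type*} [MetricSpace X]

/-- The set of (constant speed) geodesics of `X`, parametrized on `[0,1]`,
encoded as functions `ℝ → X`. -/
def GeoSet (X : Type*) [MetricSpace X] : Set (ℝ → X) :=
  {γ | ∀ s ∈ Icc (0:ℝ) 1, ∀ t ∈ Icc (0:ℝ) 1, dist (γ s) (γ t) = |s - t| * dist (γ 0) (γ 1)}

/-- `(X,d)` is a geodesic space: any two points are joined by a geodesic. -/
def IsGeodesicSpace (X : Type*) [MetricSpace X] : Prop :=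
  ∀ x y : X, ∃ γ ∈ GeoSet X, γ 0 = x ∧ γ 1 = y

variable [MeasurableSpace X]

/-- `π` is a coupling of `μ₀` and `μ₁`. -/
def IsCoupling (π : Measure (X × X)) (μ₀ μ₁ : Measure X) : Prop :=
  π.map Prod.fst = μ₀ ∧ π.map Prod.snd = μ₁

/-- The squared `L²`-Wasserstein distance, valued in `ℝ≥0∞`. -/
def W2sq (μ₀ μ₁ : Measure X) : ℝ≥0∞ :=
  sInf ((fun π : Measure (X × X) => ∫⁻ p, ENNReal.ofReal (dist p.1 p.2 ^ 2) ∂π) ''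
    {π | IsCoupling π μ₀ μ₁})

/-- `μ` is a Borel probability measure with finite second moment which is absolutely
continuous with respect to `m`. -/
def P2ac (m μ : Measure X) : Prop :=
  IsProbabilityMeasure μ ∧ (∃ x₀ : X, ∫⁻ x, ENNReal.ofReal (dist x x₀ ^ 2) ∂μ ≠ ∞) ∧ μ ≪ m

/-- `ν` is an optimal dynamical plan from `μ₀` to `μ₁`: it is a probability measure
concentrated on geodesics whose endpoint marginals form an optimal coupling. -/
def IsOptGeo (ν : Measure (ℝ → X)) (μ₀ μ₁ : Measure X) : Prop :=
  IsProbabilityMeasure ν ∧ ν (GeoSet X)ᶜ = 0 ∧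
  IsCoupling (ν.map (fun γ => (γ 0, γ 1))) μ₀ μ₁ ∧
  (∫⁻ γ, ENNReal.ofReal (dist (γ 0) (γ 1) ^ 2) ∂ν) = W2sq μ₀ μ₁

/-- `F` is a set of non-branching geodesics. -/
def IsNonBranchingSet (F : Set (ℝ → X)) : Prop :=
  ∀ γ₁ ∈ F, ∀ γ₂ ∈ F,
    (∃ tb ∈ Ioo (0:ℝ) 1, ∀ t ∈ Icc (0:ℝ) tb, γ₁ t = γ₂ t) →
      ∀ t ∈ Icc (0:ℝ) 1, γ₁ t = γ₂ t

/-- `(X,d,m)` is essentially non-branching. -/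
def EssNonBranching (m : Measure X) : Prop :=
  ∀ μ₀ μ₁ : Measure X, P2ac m μ₀ → P2ac m μ₁ →
    ∀ ν : Measure (ℝ → X), IsOptGeo ν μ₀ μ₁ →
      ∃ F ⊆ GeoSet X, IsNonBranchingSet F ∧ ν Fᶜ = 0

/-- The distortion coefficient `σ_{K,N}^{(t)}(θ)`, valued in `ℝ≥0∞`. -/
def sigmaC (K N t θ : ℝ) : ℝ≥0∞ :=
  if N * Real.pi ^ 2 ≤ K * θ ^ 2 then ∞
  else if 0 < K * θ ^ 2 then
    ENNReal.ofReal (Real.sin (t * θ * Real.sqrt (K / N)) / Real.sin (θ * Real.sqrt (K / N)))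
  else if K * θ ^ 2 = 0 then ENNReal.ofReal t
  else if N = 0 then ENNReal.ofReal t
  else if 0 < N then
    ENNReal.ofReal (Real.sinh (t * θ * Real.sqrt (-K / N)) / Real.sinh (θ * Real.sqrt (-K / N)))
  else ENNReal.ofReal t

/-- The distortion coefficient `τ_{K,N}^{(t)}(θ) = t^{1/N} σ_{K,N-1}^{(t)}(θ)^{(N-1)/N}`. -/
def tauC (K N t θ : ℝ) : ℝ≥0∞ :=
  ENNReal.ofReal t ^ ((1:ℝ) / N) * sigmaC K (N - 1) t θ ^ ((N - 1) / N)

/-- The defining interpolation inequality of the curvature-dimension conditions, for a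
dynamical plan `ν`, with interpolation coefficients `coeff`. -/
def CDInterp (coeff : ℝ → ℝ → ℝ≥0∞) (N : ℝ) (m : Measure X) (ν : Measure (ℝ → X)) : Prop :=
  ∃ ρ : ℝ → X → ℝ≥0∞,
    (∀ t ∈ Icc (0:ℝ) 1, ν.map (fun γ => γ t) = m.withDensity (ρ t)) ∧
    ∀ t ∈ Icc (0:ℝ) 1, ∀ᵐ γ ∂ν,
      coeff (1 - t) (dist (γ 0) (γ 1)) * ρ 0 (γ 0) ^ (-(1:ℝ) / N) +
        coeff t (dist (γ 0) (γ 1)) * ρ 1 (γ 1) ^ (-(1:ℝ) / N)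
        ≤ ρ t (γ t) ^ (-(1:ℝ) / N)

/-- The curvature-dimension condition `CD(K,N)` (for essentially non-branching spaces). -/
def CD (K N : ℝ) (m : Measure X) : Prop :=
  ∀ μ₀ μ₁ : Measure X, P2ac m μ₀ → P2ac m μ₁ →
    ∃ ν : Measure (ℝ → X), IsOptGeo ν μ₀ μ₁ ∧ CDInterp (fun t θ => tauC K N t θ) N m ν

/-- The reduced curvature-dimension condition `CD*(K,N)` (for essentially non-branching
spaces). -/
def CDstar (K N : ℝ) (m : Measure X) : Prop :=
  ∀ μ₀ μ₁ : Measure X, P2ac m μ₀ → P2ac m μ₁ →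
    ∃ ν : Measure (ℝ → X), IsOptGeo ν μ₀ μ₁ ∧ CDInterp (fun t θ => sigmaC K N t θ) N m ν

/-- The local curvature-dimension condition `CD_loc(K,N)`. -/
def CDloc (K N : ℝ) (m : Measure X) : Prop :=
  ∀ x : X, ∃ U ∈ 𝓝 x,
    ∀ μ₀ μ₁ : Measure X, P2ac m μ₀ → P2ac m μ₁ → μ₀ Uᶜ = 0 → μ₁ Uᶜ = 0 →
      ∃ ν : Measure (ℝ → X), IsOptGeo ν μ₀ μ₁ ∧ CDInterp (fun t θ => tauC K N t θ) N m ν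

/-- The slope (local Lipschitz constant) `|∇f|(x)`; it equals `0` at isolated points. -/
def slope (f : X → ℝ) (x : X) : ℝ :=
  limsup (fun y => |f x - f y| / dist x y) (𝓝[≠] x)

/-- `f` is a (real valued) Lipschitz function. -/
def IsLip (f : X → ℝ) : Prop := ∃ C : ℝ≥0, LipschitzWith C f

/-- The first nontrivial eigenvalue `λ^{1,p}` of the `p`-Laplacian of `(X,d,m)`,
defined variationally. -/
def lamOneP (m : Measure X) (p : ℝ) : ℝ :=
  sInf {r : ℝ | ∃ f : X → ℝ, IsLip f ∧ MemLp f (ENNReal.ofReal p) m ∧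
    (∫ x, |f x| ^ p ∂m) ≠ 0 ∧ (∫ x, f x * |f x| ^ (p - 2) ∂m) = 0 ∧
    r = (∫ x, slope f x ^ p ∂m) / ∫ x, |f x| ^ p ∂m}

/-- The set of intermediate points at time `t` between `A₀` and `A₁`. -/
def interSet (A₀ A₁ : Set X) (t : ℝ) : Set X :=
  (fun γ : ℝ → X => γ t) '' {γ | γ ∈ GeoSet X ∧ γ 0 ∈ A₀ ∧ γ 1 ∈ A₁}

/-- The minimal (if `K ≥ 0`), resp. maximal (if `K < 0`), length of geodesics from
`A₀` to `A₁`. -/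
def thetaBM (K : ℝ) (A₀ A₁ : Set X) : ℝ :=
  if 0 ≤ K then sInf {d | ∃ x₀ ∈ A₀, ∃ x₁ ∈ A₁, d = dist x₀ x₁}
  else sSup {d | ∃ x₀ ∈ A₀, ∃ x₁ ∈ A₁, d = dist x₀ x₁}

open Classical in
/-- The relative entropy `Ent_m(μ) ∈ [0,∞]`. -/
def relEnt (m μ : Measure X) : ℝ≥0∞ :=
  if μ ≪ m ∧ Integrable (fun x => (μ.rnDeriv m x).toReal * Real.log (μ.rnDeriv m x).toReal) m
  then ENNReal.ofReal (∫ x, (μ.rnDeriv m x).toReal * Real.log (μ.rnDeriv m x).toReal ∂m)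
  else ∞

/-- The (outer) Minkowski content `m⁺(E)`. -/
def minkContent (m : Measure X) (E : Set X) : ℝ :=
  liminf (fun ε : ℝ => ((m (thickening ε E)).toReal - (m E).toReal) / ε) (𝓝[>] (0:ℝ))

/-- The Cheeger (isoperimetric) constant `h_{(X,d,m)}`. -/
def cheegerConst (m : Measure X) : ℝ :=
  sInf {r : ℝ | ∃ E : Set X, MeasurableSet E ∧ (m E).toReal ∈ Ioc (0:ℝ) (1/2) ∧
    r = minkContent m E / (m E).toReal}

/-! ### One-dimensional model objects -/

/-- Membership in the smooth model family `F_{K,N,D}`: probability measures on `ℝ`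
supported in `[0,D]` with a `C²` density on `(0,D)` satisfying
`(h^{1/(N-1)})'' + K/(N-1) · h^{1/(N-1)} ≤ 0`. -/
def memF (K N D : ℝ) (μ : Measure ℝ) : Prop :=
  IsProbabilityMeasure μ ∧ μ (Icc (0:ℝ) D)ᶜ = 0 ∧
  ∃ h : ℝ → ℝ, (∀ x, 0 ≤ h x) ∧
    μ = volume.withDensity (fun x => ENNReal.ofReal (h x)) ∧
    ContDiffOn ℝ 2 h (Ioo 0 D) ∧
    ∀ t ∈ Ioo (0:ℝ) D,
      deriv (deriv fun s => h s ^ ((1:ℝ) / (N - 1))) t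
        + K / (N - 1) * h t ^ ((1:ℝ) / (N - 1)) ≤ 0

/-- The weak `(K,N)`-concavity (synthetic `CD(K,N)`) inequality for a density `h`,
required for `t₀ < t₁` ranging in a set `S`. -/
def SynthCD (K N : ℝ) (h : ℝ → ℝ) (S : Set ℝ) : Prop :=
  ∀ t₀ ∈ S, ∀ t₁ ∈ S, t₀ < t₁ → ∀ s ∈ Icc (0:ℝ) 1,
    sigmaC K (N - 1) (1 - s) (t₁ - t₀) * ENNReal.ofReal (h t₀ ^ ((1:ℝ) / (N - 1))) +
      sigmaC K (N - 1) s (t₁ - t₀) * ENNReal.ofReal (h t₁ ^ ((1:ℝ) / (N - 1)))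
      ≤ ENNReal.ofReal (h ((1 - s) * t₀ + s * t₁) ^ ((1:ℝ) / (N - 1)))

/-- Membership in the synthetic model family `F^s_{K,N,D}`. -/
def memFs (K N D : ℝ) (μ : Measure ℝ) : Prop :=
  IsProbabilityMeasure μ ∧ μ (Icc (0:ℝ) D)ᶜ = 0 ∧
  ∃ h : ℝ → ℝ, (∀ x, 0 ≤ h x) ∧
    μ = volume.withDensity (fun x => ENNReal.ofReal (h x)) ∧
    (if N = 1 then ∀ x ∈ Function.support h, ∀ y ∈ Function.support h, h x = h y
     else Continuous h ∧ SynthCD K N h (Icc 0 D))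

/-- The model first eigenvalue `λ^{1,p}_{K,N,D}` of the `p`-Laplacian (smooth family). -/
def lamOnePModel (K N D p : ℝ) : ℝ :=
  sInf {r : ℝ | ∃ μ : Measure ℝ, memF K N D μ ∧ ∃ u : ℝ → ℝ, IsLip u ∧
    MemLp u (ENNReal.ofReal p) μ ∧ (∫ x, |u x| ^ p ∂μ) ≠ 0 ∧
    (∫ x, u x * |u x| ^ (p - 2) ∂μ) = 0 ∧
    r = (∫ x, slope u x ^ p ∂μ) / ∫ x, |u x| ^ p ∂μ}

/-- The synthetic model first eigenvalue `^sλ^{1,p}_{K,N,D}` of the `p`-Laplacian. -/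
def lamOnePModelS (K N D p : ℝ) : ℝ :=
  sInf {r : ℝ | ∃ μ : Measure ℝ, memFs K N D μ ∧ ∃ u : ℝ → ℝ, IsLip u ∧
    MemLp u (ENNReal.ofReal p) μ ∧ (∫ x, |u x| ^ p ∂μ) ≠ 0 ∧
    (∫ x, u x * |u x| ^ (p - 2) ∂μ) = 0 ∧
    r = (∫ x, slope u x ^ p ∂μ) / ∫ x, |u x| ^ p ∂μ}

/-- The model Log-Sobolev constant `α^{LS}_{K,N,D}`. -/
def logSobConst (K N D : ℝ) : ℝ :=
  sSup {α : ℝ | 0 < α ∧ ∀ μ : Measure ℝ, memFs K N D μ →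
    ∀ f : ℝ → ℝ, IsLip f → (∀ x, 0 ≤ f x) → (∫ x, f x ∂μ) = 1 →
      2 * α * ∫ x, f x * Real.log (f x) ∂μ ≤ ∫ x in {y | 0 < f y}, slope f x ^ 2 / f x ∂μ}

/-- The model `(p,q)`-Sobolev constant `α^{p,q}_{K,N,D}` (smooth family). -/
def sobolevConst (K N D p q : ℝ) : ℝ :=
  sSup {α : ℝ | 0 < α ∧ ∀ μ : Measure ℝ, memF K N D μ →
    ∀ f : ℝ → ℝ, IsLip f →
      α / (p - q) * ((∫ x, |f x| ^ p ∂μ) ^ (q / p) - ∫ x, |f x| ^ q ∂μ)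
        ≤ ∫ x, slope f x ^ q ∂μ}

/-- The synthetic model `(p,q)`-Sobolev constant `^sα^{p,q}_{K,N,D}`. -/
def sobolevConstS (K N D p q : ℝ) : ℝ :=
  sSup {α : ℝ | 0 < α ∧ ∀ μ : Measure ℝ, memFs K N D μ →
    ∀ f : ℝ → ℝ, IsLip f →
      α / (p - q) * ((∫ x, |f x| ^ p ∂μ) ^ (q / p) - ∫ x, |f x| ^ q ∂μ)
        ≤ ∫ x, slope f x ^ q ∂μ}

/-! ### Model Cheeger constant -/

/-- `s_δ`. -/
def sdelta (δ t : ℝ) : ℝ :=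
  if 0 < δ then Real.sin (Real.sqrt δ * t) / Real.sqrt δ
  else if δ = 0 then t
  else Real.sinh (Real.sqrt (-δ) * t) / Real.sqrt (-δ)

/-- `c_δ`. -/
def cdelta (δ t : ℝ) : ℝ :=
  if 0 < δ then Real.cos (Real.sqrt δ * t)
  else if δ = 0 then 1
  else Real.cosh (Real.sqrt (-δ) * t)

/-- The set `[ξ₋, ξ₊]` between the first non-positive and first positive roots of `f`. -/
def betweenRoots (f : ℝ → ℝ) : Set ℝ :=
  {t | (∀ s, 0 < s → s < t → f s ≠ 0) ∧ (∀ s, t < s → s ≤ 0 → f s ≠ 0)}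

/-- `f₊ = f · χ_{[ξ₋, ξ₊]}`. -/
def fplus (f : ℝ → ℝ) : ℝ → ℝ := (betweenRoots f).indicator f

/-- The model density `J_{H,K,N}`. -/
def Jfun (H K N : ℝ) (t : ℝ) : ℝ :=
  if N = 1 then
    (if 0 < K then (if t = 0 then 1 else 0) else (if 0 ≤ H * t then 1 else 0))
  else
    fplus (fun s => cdelta (K / (N - 1)) s + H / (N - 1) * sdelta (K / (N - 1)) s) t
      ^ (N - 1)

/-- The probability measure `μ_{f,L}` on `L ⊆ ℝ` with density proportional to `f`. -/
def probOfDensity (f : ℝ → ℝ) (L : Set ℝ) : Measure ℝ :=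
  (∫⁻ x in L, ENNReal.ofReal (f x))⁻¹ •
    (volume.restrict L).withDensity fun x => ENNReal.ofReal (f x)

/-- The interval `[-a, D-a]` (allowing `D = ∞`). -/
def modelInterval (a : ℝ) (D : ℝ≥0∞) : Set ℝ :=
  {x | -a ≤ x ∧ ENNReal.ofReal (x + a) ≤ D}

/-- The model Cheeger constant `h_{K,N,D}`, `D ∈ (0,∞]`. -/
def cheegerModel (K N : ℝ) (D : ℝ≥0∞) : ℝ :=
  sInf {r : ℝ | ∃ H a : ℝ, 0 ≤ a ∧ ENNReal.ofReal a ≤ D ∧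
    r = cheegerConst (probOfDensity (Jfun H K N) (modelInterval a D))}


/-! ### Auxiliary lemmas for `weak_concavity_regularity` -/

open Real in
/-- Real-valued distortion coefficient. -/
def csig (K N s θ : ℝ) : ℝ :=
  if 0 < K then sin (s * θ * sqrt (K / N)) / sin (θ * sqrt (K / N))
  else if K = 0 then s
  else sinh (s * θ * sqrt (-K / N)) / sinh (θ * sqrt (-K / N))

open Real

lemma aux_sinh_le_mul_exp {x : ℝ} (hx : 0 ≤ x) : sinh x ≤ x * exp x := by
  rw [Real.sinh_eq]
  have h1 : 1 + -(2 * x) ≤ exp (-(2 * x)) := by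
    have := Real.add_one_le_exp (-(2 * x)); linarith
  have h3 : exp x * (1 - 2 * x) ≤ exp (-x) := by
    have he : exp (-x) = exp x * exp (-(2 * x)) := by rw [← Real.exp_add]; ring_nf
    rw [he]
    exact mul_le_mul_of_nonneg_left (by linarith) (Real.exp_pos x).le
  nlinarith [Real.exp_pos x]

lemma aux_cosh_le_exp {x : ℝ} (hx : 0 ≤ x) : cosh x ≤ exp x := by
  rw [Real.cosh_eq]
  have : exp (-x) ≤ exp x := Real.exp_le_exp.mpr (by linarith)
  linarith

lemma aux_mul_sin_le {s α : ℝ} (hs : 0 ≤ s) (hs1 : s ≤ 1) (hα : 0 ≤ α) (hαπ : α ≤ π) :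
    s * sin α ≤ sin (s * α) := by
  have := strictConcaveOn_sin_Icc.concaveOn.2 (show (0:ℝ) ∈ Set.Icc 0 π from ⟨le_rfl, Real.pi_pos.le⟩)
    (show α ∈ Set.Icc 0 π from ⟨hα, hαπ⟩) (by linarith : (0:ℝ) ≤ 1 - s) hs (by ring)
  simpa using this

lemma aux_jordan {α : ℝ} (hα : 0 ≤ α) (hαπ : α ≤ π / 2) : 2 / π * α ≤ sin α := by
  have hπ := Real.pi_pos
  have h2 : (2 / π * α) * (π / 2) = α := by field_simp
  have := strictConcaveOn_sin_Icc.concaveOn.2 (show (0:ℝ) ∈ Set.Icc 0 π from ⟨le_rfl, hπ.le⟩)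
    (show π / 2 ∈ Set.Icc 0 π from ⟨by positivity, by linarith⟩)
    (show (0:ℝ) ≤ 1 - 2 / π * α by rw [sub_nonneg, div_mul_eq_mul_div, div_le_one hπ]; linarith)
    (show (0:ℝ) ≤ 2 / π * α by positivity) (by ring)
  simp only [smul_eq_mul, Real.sin_zero, mul_zero, zero_add, Real.sin_pi_div_two,
    mul_one] at this
  rwa [h2] at this

lemma sigmaC_eq_csig {K N θ : ℝ} (hN : 0 < N) (hθ : 0 < θ)
    (hfin : K * θ ^ 2 < N * π ^ 2) (s : ℝ) :
    sigmaC K N s θ = ENNReal.ofReal (csig K N s θ) := by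
  rw [sigmaC, csig, if_neg (not_le.mpr hfin)]
  rcases lt_trichotomy K 0 with hK | hK | hK
  · rw [if_neg (by nlinarith [pow_pos hθ 2] : ¬0 < K * θ ^ 2),
      if_neg (by nlinarith [pow_pos hθ 2] : ¬K * θ ^ 2 = 0),
      if_neg (by linarith : ¬N = 0), if_pos hN, if_neg (not_lt.mpr hK.le), if_neg hK.ne]
  · subst hK
    rw [if_neg (by nlinarith : ¬(0:ℝ) < 0 * θ ^ 2), if_pos (by ring), if_neg (lt_irrefl 0),
      if_pos rfl]
  · rw [if_pos (by nlinarith [pow_pos hθ 2] : 0 < K * θ ^ 2), if_pos hK]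

lemma csig_lower {K N s θ Θ : ℝ} (hN : 0 < N) (hθ : 0 < θ) (hΘ : θ ≤ Θ)
    (hfin : K * θ ^ 2 < N * π ^ 2) (hs : 0 ≤ s) (hs1 : s ≤ 1) :
    exp (-(Θ * sqrt (|K| / N))) * s ≤ csig K N s θ := by
  have hΘ0 : 0 ≤ Θ := le_trans hθ.le hΘ
  have hexp1 : exp (-(Θ * sqrt (|K| / N))) ≤ 1 := by
    rw [Real.exp_le_one_iff]
    have := Real.sqrt_nonneg (|K| / N)
    nlinarith
  have hexp0 : 0 < exp (-(Θ * sqrt (|K| / N))) := Real.exp_pos _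
  rw [csig]
  rcases lt_trichotomy K 0 with hK | hK | hK
  · rw [if_neg (not_lt.mpr hK.le), if_neg hK.ne]
    set α := θ * sqrt (-K / N) with hα
    have hα0 : 0 < α := mul_pos hθ (Real.sqrt_pos.mpr (div_pos (neg_pos.mpr hK) hN))
    have hαA : α ≤ Θ * sqrt (|K| / N) := by
      rw [abs_of_neg hK]
      exact mul_le_mul_of_nonneg_right hΘ (Real.sqrt_nonneg _)
    have hsinhα : 0 < sinh α := Real.sinh_pos_iff.mpr hα0
    rw [show s * θ * sqrt (-K / N) = s * α by rw [hα]; ring, le_div_iff₀ hsinhα]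
    have h1 : sinh α ≤ α * exp α := aux_sinh_le_mul_exp hα0.le
    have h2 : s * α ≤ sinh (s * α) := Real.self_le_sinh_iff.mpr (mul_nonneg hs hα0.le)
    have h3 : exp (-(Θ * sqrt (|K| / N))) * exp α ≤ 1 := by
      rw [← Real.exp_add]
      rw [Real.exp_le_one_iff]
      linarith
    nlinarith [mul_le_mul_of_nonneg_left h1 (mul_nonneg hexp0.le hs),
      mul_le_mul_of_nonneg_left h3 (mul_nonneg hs hα0.le)]
  · subst hK
    rw [if_neg (lt_irrefl 0), if_pos rfl]
    nlinarith
  · rw [if_pos hK]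
    set α := θ * sqrt (K / N) with hα
    have hα0 : 0 < α := mul_pos hθ (Real.sqrt_pos.mpr (by positivity))
    have hα2 : α ^ 2 = K * θ ^ 2 / N := by
      rw [hα, mul_pow, Real.sq_sqrt (by positivity : 0 ≤ K / N)]; field_simp
    have hαπ : α < π := by
      have hπ := Real.pi_pos
      have : α ^ 2 < π ^ 2 := by rw [hα2]; rw [div_lt_iff₀ hN]; nlinarith
      nlinarith
    have hsinα : 0 < sin α := Real.sin_pos_of_pos_of_lt_pi hα0 hαπ
    rw [show s * θ * sqrt (K / N) = s * α by rw [hα]; ring, le_div_iff₀ hsinα]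
    have h1 : s * sin α ≤ sin (s * α) := aux_mul_sin_le hs hs1 hα0.le hαπ.le
    nlinarith [mul_le_mul_of_nonneg_right hexp1 (mul_nonneg hs hsinα.le)]

lemma csig_nonneg {K N s θ : ℝ} (hN : 0 < N) (hθ : 0 < θ)
    (hfin : K * θ ^ 2 < N * π ^ 2) (hs : 0 ≤ s) (hs1 : s ≤ 1) :
    0 ≤ csig K N s θ :=
  le_trans (by positivity) (csig_lower hN hθ le_rfl hfin hs hs1)

lemma csig_pos {K N s θ : ℝ} (hN : 0 < N) (hθ : 0 < θ)
    (hfin : K * θ ^ 2 < N * π ^ 2) (hs : 0 < s) (hs1 : s ≤ 1) :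
    0 < csig K N s θ := by
  have := csig_lower hN hθ le_rfl hfin hs.le hs1
  nlinarith [Real.exp_pos (-(θ * sqrt (|K| / N)))]

lemma sigmaC_ne_zero {K N s θ : ℝ} (hN : 0 < N) (hθ : 0 < θ) (hs : 0 < s) (hs1 : s ≤ 1) :
    sigmaC K N s θ ≠ 0 := by
  rcases le_or_gt (N * π ^ 2) (K * θ ^ 2) with hfin | hfin
  · rw [sigmaC, if_pos hfin]; exact ENNReal.top_ne_zero
  · rw [sigmaC_eq_csig hN hθ hfin]
    exact (ENNReal.ofReal_pos.mpr (csig_pos hN hθ hfin hs hs1)).ne'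

set_option maxHeartbeats 1000000 in
lemma csig_one_sub {K N s θ Θ : ℝ} (hN : 0 < N) (hθ : 0 < θ) (hΘ : θ ≤ Θ)
    (hK2 : K * Θ ^ 2 ≤ N * (π / 2) ^ 2) (hs : 0 ≤ s) (hs1 : s ≤ 1) :
    1 - (3 + exp (2 * (Θ * sqrt (|K| / N)))) * s ≤ csig K N (1 - s) θ := by
  have hΘ0 : 0 ≤ Θ := le_trans hθ.le hΘ
  have hexp0 : (0:ℝ) < exp (2 * (Θ * sqrt (|K| / N))) := Real.exp_pos _
  rw [csig]
  rcases lt_trichotomy K 0 with hK | hK | hK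
  · rw [if_neg (not_lt.mpr hK.le), if_neg hK.ne]
    set A := Θ * sqrt (|K| / N) with hA
    set α := θ * sqrt (-K / N) with hα
    have hα0 : 0 < α := mul_pos hθ (Real.sqrt_pos.mpr (div_pos (neg_pos.mpr hK) hN))
    have hαA : α ≤ A := by
      rw [hA, abs_of_neg hK]
      exact mul_le_mul_of_nonneg_right hΘ (Real.sqrt_nonneg _)
    have hA0 : 0 ≤ A := le_trans hα0.le hαA
    have hsinhα : 0 < sinh α := Real.sinh_pos_iff.mpr hα0
    rw [show (1 - s) * θ * sqrt (-K / N) = α - s * α by rw [hα]; ring, le_div_iff₀ hsinhα,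
      Real.sinh_sub]
    have hc1 : 1 ≤ cosh (s * α) := Real.one_le_cosh _
    have hc2 : cosh α ≤ exp α := aux_cosh_le_exp hα0.le
    have hc3 : sinh (s * α) ≤ s * α * exp (s * α) := aux_sinh_le_mul_exp (mul_nonneg hs hα0.le)
    have hc4 : α ≤ sinh α := Real.self_le_sinh_iff.mpr hα0.le
    have hc5 : exp α * exp (s * α) ≤ exp (2 * A) := by
      rw [← Real.exp_add, Real.exp_le_exp]
      nlinarith
    have hc6 : cosh α * sinh (s * α) ≤ s * sinh α * exp (2 * A) := by
      have h7 : cosh α * sinh (s * α) ≤ exp α * (s * α * exp (s * α)) := by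
        have := Real.cosh_pos (x := α)
        have h8 : (0:ℝ) ≤ sinh (s * α) := by
          rw [← Real.sinh_zero]
          exact Real.sinh_le_sinh.mpr (mul_nonneg hs hα0.le)
        nlinarith
      have h9 : exp α * (s * α * exp (s * α)) = s * α * (exp α * exp (s * α)) := by ring
      nlinarith [mul_le_mul_of_nonneg_left hc5 (mul_nonneg hs hα0.le),
        mul_le_mul_of_nonneg_right hc4 (mul_nonneg hs hexp0.le)]
    nlinarith [mul_le_mul_of_nonneg_left hc1 hsinhα.le]
  · subst hK
    rw [if_neg (lt_irrefl 0), if_pos rfl]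
    nlinarith
  · rw [if_pos hK]
    set α := θ * sqrt (K / N) with hα
    have hα0 : 0 < α := mul_pos hθ (Real.sqrt_pos.mpr (by positivity))
    have hα2 : α ^ 2 = K * θ ^ 2 / N := by
      rw [hα, mul_pow, Real.sq_sqrt (by positivity : 0 ≤ K / N)]; field_simp
    have hπ := Real.pi_pos
    have hαπ2 : α ≤ π / 2 := by
      have h1 : K * θ ^ 2 ≤ K * Θ ^ 2 := by nlinarith [pow_le_pow_left₀ hθ.le hΘ 2]
      have : α ^ 2 ≤ (π / 2) ^ 2 := by rw [hα2, div_le_iff₀ hN]; nlinarith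
      nlinarith [sq_nonneg (α - π / 2), sq_nonneg (α + π / 2)]
    have hsinα : 0 < sin α := Real.sin_pos_of_pos_of_lt_pi hα0 (by linarith)
    rw [show (1 - s) * θ * sqrt (K / N) = α - s * α by rw [hα]; ring, le_div_iff₀ hsinα,
      Real.sin_sub]
    have hd1 : 1 - (s * α) ^ 2 / 2 ≤ cos (s * α) := Real.one_sub_sq_div_two_le_cos
    have hd2 : cos α ≤ 1 := Real.cos_le_one α
    have hd3 : sin (s * α) ≤ s * α := Real.sin_le (mul_nonneg hs hα0.le)
    have hd35 : 0 ≤ sin (s * α) := Real.sin_nonneg_of_nonneg_of_le_pi (mul_nonneg hs hα0.le)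
      (by nlinarith)
    have hd4 : 2 / π * α ≤ sin α := aux_jordan hα0.le hαπ2
    have hd5 : 0 ≤ cos α := Real.cos_nonneg_of_mem_Icc ⟨by linarith, hαπ2⟩
    have hπ315 : π < 3.15 := Real.pi_lt_d2
    -- key: 3 * s * sin α ≥ sin α * (s*α)^2/2 + s * α
    have hkey : sin α * ((s * α) ^ 2 / 2) + s * α ≤ 3 * (s * sin α) := by
      have e1 : s * α ≤ (π / 2) * (s * sin α) := by
        have t1 : π / 2 * (2 / π * α) = α := by field_simp
        have t2 := mul_le_mul_of_nonneg_left
          (mul_le_mul_of_nonneg_left hd4 (by positivity : (0:ℝ) ≤ π / 2)) hs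
        rw [t1] at t2
        nlinarith [t2]
      have t3 : (s * α) ^ 2 ≤ s * (π / 2) ^ 2 := by
        have t4 : s * s * α ^ 2 ≤ s * α ^ 2 := by
          nlinarith [mul_nonneg (mul_nonneg hs (sub_nonneg.mpr hs1)) (sq_nonneg α)]
        have t5 : s * α ^ 2 ≤ s * (π / 2) ^ 2 :=
          mul_le_mul_of_nonneg_left (pow_le_pow_left₀ hα0.le hαπ2 2) hs
        nlinarith [t4, t5]
      have e2 : sin α * ((s * α) ^ 2 / 2) ≤ (π ^ 2 / 8) * (s * sin α) := by
        nlinarith [mul_le_mul_of_nonneg_left t3 hsinα.le]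
      have hπ2 : π ^ 2 < 9.9225 := by nlinarith
      nlinarith [mul_nonneg hs hsinα.le]
    nlinarith [mul_le_mul_of_nonneg_left hd1 hsinα.le, mul_le_mul_of_nonneg_right hd2 hd35,
      mul_nonneg (mul_nonneg hexp0.le hs) hsinα.le]

set_option maxHeartbeats 4000000 in
/-- Regularity of weakly `(K,N)`-concave densities: the positivity set is convex and the
density is locally Lipschitz on its interior. -/
theorem weak_concavity_regularity (K N : ℝ) (hN : 1 < N) (I : Set ℝ) (hI : Convex ℝ I)
    (h : ℝ → ℝ) (hpos : ∀ t ∈ I, 0 ≤ h t) (hconc : SynthCD K N h I) :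
    Convex ℝ {t ∈ I | 0 < h t} ∧
    ∀ x ∈ interior {t ∈ I | 0 < h t}, ∃ ε > 0, ∃ C : ℝ≥0,
      LipschitzOnWith C h (Metric.ball x ε ∩ interior {t ∈ I | 0 < h t}) := by
  have hN' : 0 < N - 1 := by linarith
  have hNe : (1:ℝ) / (N - 1) ≠ 0 := one_div_ne_zero (by linarith)
  have main : ∀ p q a b : ℝ, p ∈ {t ∈ I | 0 < h t} → q ∈ {t ∈ I | 0 < h t} →
      0 ≤ a → 0 ≤ b → a + b = 1 → p < q → a * p + b * q ∈ {t ∈ I | 0 < h t} := by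
    intro p q a b hp hq ha hb hab hpq
    have hmI : a * p + b * q ∈ I := by
      have := hI hp.1 hq.1 ha hb hab; simpa using this
    refine ⟨hmI, ?_⟩
    by_cases hb1 : b = 1
    · subst hb1
      have haz : a = 0 := by linarith
      simpa [haz] using hq.2
    have ha0 : 0 < a := by
      have hb' : b < 1 := lt_of_le_of_ne (by linarith) hb1
      linarith
    by_contra hc
    have hm0 : h (a * p + b * q) = 0 := le_antisymm (not_lt.mp hc) (hpos _ hmI)
    have hineq := hconc p hp.1 q hq.1 hpq b ⟨hb, by linarith⟩
    rw [show (1 - b : ℝ) = a by linarith] at hineq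
    rw [hm0, Real.zero_rpow hNe, ENNReal.ofReal_zero, nonpos_iff_eq_zero] at hineq
    obtain ⟨h1, -⟩ := add_eq_zero.mp hineq
    rcases mul_eq_zero.mp h1 with h2 | h2
    · exact sigmaC_ne_zero hN' (by linarith : (0:ℝ) < q - p) (by linarith : (0:ℝ) < a)
        (by linarith) h2
    · exact absurd h2 (ENNReal.ofReal_pos.mpr (Real.rpow_pos_of_pos hp.2 _)).ne'
  constructor
  · intro p hp q hq a b ha hb hab
    simp only [smul_eq_mul]
    rcases lt_trichotomy p q with hpq | rfl | hqp
    · exact main p q a b hp hq ha hb hab hpq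
    · rw [show a * p + b * p = p by rw [← add_mul, hab, one_mul]]; exact hp
    · have := main q p b a hq hp hb ha (by linarith) hqp
      rwa [show b * q + a * p = a * p + b * q by ring] at this
  · intro x hx
    obtain ⟨ε₀, hε₀, hball⟩ := Metric.isOpen_iff.mp isOpen_interior x hx
    obtain ⟨ε, hεpos, hεε₀, hKε⟩ :
        ∃ ε : ℝ, 0 < ε ∧ 6 * ε ≤ ε₀ ∧ K * (10 * ε) ^ 2 ≤ (N - 1) * (π / 2) ^ 2 := by
      have hmaxK : (0:ℝ) < max K 1 := lt_max_of_lt_right one_pos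
      set ε : ℝ := min (ε₀ / 6) (π / 20 * Real.sqrt ((N - 1) / max K 1)) with hεdef
      have hεpos : 0 < ε := lt_min (by linarith) (by positivity)
      refine ⟨ε, hεpos, ?_, ?_⟩
      · have := min_le_left (ε₀ / 6) (π / 20 * Real.sqrt ((N - 1) / max K 1)); linarith
      rcases le_or_gt K 0 with hK | hK
      · have h1 : K * (10 * ε) ^ 2 ≤ 0 := mul_nonpos_of_nonpos_of_nonneg hK (sq_nonneg _)
        nlinarith [mul_pos hN' (pow_pos (by positivity : (0:ℝ) < π / 2) 2)]
      · have h1 : ε ≤ π / 20 * Real.sqrt ((N - 1) / max K 1) := min_le_right _ _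
        have h3 : Real.sqrt ((N - 1) / max K 1) ≤ Real.sqrt ((N - 1) / K) :=
          Real.sqrt_le_sqrt (div_le_div_of_nonneg_left hN'.le hK (le_max_left _ _))
        have hsq : Real.sqrt ((N - 1) / K) ^ 2 = (N - 1) / K := Real.sq_sqrt (by positivity)
        have h5 : 0 ≤ Real.sqrt ((N - 1) / K) := Real.sqrt_nonneg _
        have h6 : 10 * ε ≤ π / 2 * Real.sqrt ((N - 1) / K) := by
          nlinarith [mul_le_mul_of_nonneg_left h3 (by positivity : (0:ℝ) ≤ π / 2)]
        have h4 : (10 * ε) ^ 2 ≤ (π / 2) ^ 2 * ((N - 1) / K) := by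
          nlinarith [h6, hsq, h5, hεpos]
        calc K * (10 * ε) ^ 2 ≤ K * ((π / 2) ^ 2 * ((N - 1) / K)) :=
              mul_le_mul_of_nonneg_left h4 hK.le
          _ = (N - 1) * (π / 2) ^ 2 := by field_simp
    have hsubP : Icc (x - 5*ε) (x + 5*ε) ⊆ {t ∈ I | 0 < h t} := by
      intro t ht
      refine interior_subset (hball ?_)
      rw [mem_ball, Real.dist_eq, abs_lt]
      exact ⟨by linarith [ht.1], by linarith [ht.2]⟩
    have hIccI : ∀ t ∈ Icc (x - 5*ε) (x + 5*ε), t ∈ I := fun t ht => (hsubP ht).1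
    have hhpos : ∀ t ∈ Icc (x - 5*ε) (x + 5*ε), 0 < h t := fun t ht => (hsubP ht).2
    set g : ℝ → ℝ := fun t => h t ^ ((1:ℝ) / (N - 1)) with hgdef
    have hgpos : ∀ t ∈ Icc (x - 5*ε) (x + 5*ε), 0 < g t :=
      fun t ht => Real.rpow_pos_of_pos (hhpos t ht) _
    have hfin10 : ∀ θ : ℝ, 0 < θ → θ ≤ 10 * ε → K * θ ^ 2 < (N - 1) * π ^ 2 := by
      intro θ hθ hθΘ
      rcases le_or_gt K 0 with hK | hK
      · have h1 : K * θ ^ 2 ≤ 0 := mul_nonpos_of_nonpos_of_nonneg hK (sq_nonneg _)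
        nlinarith [mul_pos hN' (pow_pos Real.pi_pos 2)]
      · have h1 : K * θ ^ 2 ≤ K * (10 * ε) ^ 2 :=
          mul_le_mul_of_nonneg_left (pow_le_pow_left₀ hθ.le hθΘ 2) hK.le
        nlinarith [mul_pos hN' (pow_pos Real.pi_pos 2), Real.pi_pos]
    have hkey : ∀ t₀ ∈ Icc (x - 5*ε) (x + 5*ε), ∀ t₁ ∈ Icc (x - 5*ε) (x + 5*ε), t₀ < t₁ →
        ∀ s ∈ Icc (0:ℝ) 1,
        csig K (N-1) (1-s) (t₁-t₀) * g t₀ + csig K (N-1) s (t₁-t₀) * g t₁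
          ≤ g ((1-s)*t₀ + s*t₁) := by
      intro t₀ ht₀ t₁ ht₁ hlt s hs
      have hθ : 0 < t₁ - t₀ := sub_pos.mpr hlt
      have hθΘ : t₁ - t₀ ≤ 10 * ε := by linarith [ht₀.1, ht₁.2]
      have hfin := hfin10 _ hθ hθΘ
      have hsm : (1-s)*t₀ + s*t₁ ∈ Icc (x - 5*ε) (x + 5*ε) := by
        constructor
        · nlinarith [mul_nonneg hs.1 (sub_nonneg.mpr ht₁.1),
            mul_nonneg (sub_nonneg.mpr hs.2) (sub_nonneg.mpr ht₀.1)]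
        · nlinarith [mul_nonneg hs.1 (sub_nonneg.mpr ht₁.2),
            mul_nonneg (sub_nonneg.mpr hs.2) (sub_nonneg.mpr ht₀.2)]
      have hcm := hconc t₀ (hIccI _ ht₀) t₁ (hIccI _ ht₁) hlt s hs
      rw [sigmaC_eq_csig hN' hθ hfin, sigmaC_eq_csig hN' hθ hfin,
        ← ENNReal.ofReal_mul (csig_nonneg hN' hθ hfin (by linarith [hs.2]) (by linarith [hs.1])),
        ← ENNReal.ofReal_mul (csig_nonneg hN' hθ hfin hs.1 hs.2),
        ← ENNReal.ofReal_add (mul_nonneg (csig_nonneg hN' hθ hfin (by linarith [hs.2])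
            (by linarith [hs.1])) (Real.rpow_nonneg (hpos _ (hIccI _ ht₀)) _))
          (mul_nonneg (csig_nonneg hN' hθ hfin hs.1 hs.2)
            (Real.rpow_nonneg (hpos _ (hIccI _ ht₁)) _)),
        ENNReal.ofReal_le_ofReal_iff (Real.rpow_nonneg (hpos _ (hIccI _ hsm)) _)] at hcm
      exact hcm
    have hgh : ∀ t ∈ I, g t ^ (N - 1) = h t := by
      intro t ht
      simp only [hgdef]
      rw [← Real.rpow_mul (hpos t ht), one_div,
        inv_mul_cancel₀ (by linarith : N - 1 ≠ 0), Real.rpow_one]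
    clear_value g
    set lam : ℝ := Real.exp (-(10 * ε * Real.sqrt (|K| / (N - 1)))) with hlamdef
    set Cst : ℝ := 3 + Real.exp (2 * (10 * ε * Real.sqrt (|K| / (N - 1)))) with hCstdef
    have hlam : 0 < lam := Real.exp_pos _
    have hCst : 3 ≤ Cst := by
      rw [hCstdef]; nlinarith [Real.exp_pos (2 * (10 * ε * Real.sqrt (|K| / (N - 1))))]
    have hCst0 : 0 < Cst := by linarith
    clear_value lam Cst
    have hga : 0 < g (x - 5*ε) := hgpos _ ⟨le_rfl, by linarith⟩
    have hgb : 0 < g (x + 5*ε) := hgpos _ ⟨by linarith, le_rfl⟩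
    set δ : ℝ := lam * min (g (x - 5*ε)) (g (x + 5*ε)) / 10 with hδdef
    have hδpos : 0 < δ := by
      rw [hδdef]; exact div_pos (mul_pos hlam (lt_min hga hgb)) (by norm_num)
    clear_value δ
    -- Step 1: lower bound
    have hlow : ∀ t ∈ Icc (x - 4*ε) (x + 4*ε), δ ≤ g t := by
      intro t ht
      have hba : (x + 5*ε) - (x - 5*ε) = 10 * ε := by ring
      obtain ⟨s, h10, h910, hcomb⟩ : ∃ s : ℝ, (1:ℝ)/10 ≤ s ∧ s ≤ 9/10 ∧
          (1-s)*(x - 5*ε) + s*(x + 5*ε) = t := by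
        refine ⟨(t - (x - 5*ε)) / (10 * ε), ?_, ?_, ?_⟩
        · rw [le_div_iff₀ (by linarith)]; linarith [ht.1]
        · rw [div_le_iff₀ (by linarith)]; linarith [ht.2]
        · field_simp; ring
      have hk := hkey (x - 5*ε) ⟨le_rfl, by linarith⟩ (x + 5*ε) ⟨by linarith, le_rfl⟩
        (by linarith) s ⟨by linarith, by linarith⟩
      rw [hba, hcomb] at hk
      have hfinb := hfin10 (10 * ε) (by linarith) le_rfl
      have hc1 := csig_lower hN' (by linarith : (0:ℝ) < 10 * ε) le_rfl hfinb
        (by linarith : (0:ℝ) ≤ 1 - s) (by linarith)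
      have hc2 := csig_lower hN' (by linarith : (0:ℝ) < 10 * ε) le_rfl hfinb
        (by linarith : (0:ℝ) ≤ s) (by linarith)
      rw [← hlamdef] at hc1 hc2
      have e1 : lam * (1-s) * g (x - 5*ε) ≤ csig K (N-1) (1-s) (10*ε) * g (x - 5*ε) :=
        mul_le_mul_of_nonneg_right hc1 hga.le
      have e2 : lam * s * g (x + 5*ε) ≤ csig K (N-1) s (10*ε) * g (x + 5*ε) :=
        mul_le_mul_of_nonneg_right hc2 hgb.le
      have e3 : δ ≤ lam * (1-s) * g (x - 5*ε) := by
        rw [hδdef]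
        nlinarith [mul_le_mul_of_nonneg_left (min_le_left (g (x - 5*ε)) (g (x + 5*ε))) hlam.le,
          mul_le_mul_of_nonneg_right (mul_le_mul_of_nonneg_left
            (by linarith : (1:ℝ)/10 ≤ 1 - s) hlam.le) hga.le]
      have e4 : 0 ≤ lam * s * g (x + 5*ε) :=
        mul_nonneg (mul_nonneg hlam.le (by linarith)) hgb.le
      linarith
    -- Step 2: upper bound
    have hg4 : 0 < g (x - 4*ε) := hgpos _ ⟨by linarith, by linarith⟩
    set M : ℝ := 8 / lam * g (x - 4*ε) with hMdef
    have hM0 : 0 < M := by rw [hMdef]; exact mul_pos (by positivity) hg4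
    clear_value M
    have hup : ∀ t ∈ Icc (x - 3*ε) (x + 3*ε), g t ≤ M := by
      intro t ht
      have hta : 2*ε ≤ t - (x - 5*ε) := by linarith [ht.1]
      have htb : t - (x - 5*ε) ≤ 8*ε := by linarith [ht.2]
      have hne : t - (x - 5*ε) ≠ 0 := by linarith
      obtain ⟨s, hs18, hs12, hcomb⟩ : ∃ s : ℝ, (1:ℝ)/8 ≤ s ∧ s ≤ 1/2 ∧
          (1-s)*(x - 5*ε) + s*t = x - 4*ε := by
        refine ⟨ε / (t - (x - 5*ε)), ?_, ?_, ?_⟩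
        · rw [le_div_iff₀ (by linarith)]; linarith
        · rw [div_le_iff₀ (by linarith)]; linarith
        · rw [show ∀ s : ℝ, (1-s)*(x - 5*ε) + s*t = (x - 5*ε) + s*(t-(x - 5*ε)) from
            fun s => by ring, div_mul_cancel₀ _ hne]; ring
      have hk := hkey (x - 5*ε) ⟨le_rfl, by linarith⟩ t ⟨by linarith [ht.1], by linarith [ht.2]⟩
        (by linarith [ht.1]) s ⟨by linarith, by linarith⟩
      rw [hcomb] at hk
      have hθ : 0 < t - (x - 5*ε) := by linarith
      have hfint := hfin10 _ hθ (by linarith)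
      have hc2 := csig_lower hN' hθ (by linarith : t - (x - 5*ε) ≤ 10*ε) hfint
        (by linarith : (0:ℝ) ≤ s) (by linarith)
      have hc1 := csig_nonneg hN' hθ hfint (by linarith : (0:ℝ) ≤ 1 - s) (by linarith)
      rw [← hlamdef] at hc2
      have hgt : 0 < g t := hgpos _ ⟨by linarith [ht.1], by linarith [ht.2]⟩
      have e1 : lam * s * g t ≤ csig K (N-1) s (t - (x - 5*ε)) * g t :=
        mul_le_mul_of_nonneg_right hc2 hgt.le
      have e2 : 0 ≤ csig K (N-1) (1-s) (t - (x - 5*ε)) * g (x - 5*ε) :=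
        mul_nonneg hc1 hga.le
      have e3 : lam / 8 * g t ≤ lam * s * g t := by
        nlinarith [mul_nonneg (mul_nonneg hlam.le (by linarith : (0:ℝ) ≤ s - 1/8)) hgt.le]
      have e4 : lam / 8 * g t ≤ g (x - 4*ε) := by linarith
      rw [hMdef]
      calc g t = 8 / lam * (lam / 8 * g t) := by field_simp
        _ ≤ 8 / lam * g (x - 4*ε) := mul_le_mul_of_nonneg_left e4 (by positivity)
    -- Step 3: Lipschitz estimate for g on Icc (x-ε) (x+ε)
    have hslope : ∀ u ∈ Icc (x-ε) (x+ε), ∀ v ∈ Icc (x-ε) (x+ε), u < v →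
        g u - g v ≤ M * Cst / (2*ε) * (v-u) ∧ g v - g u ≤ M * Cst / (2*ε) * (v-u) := by
      intro u hu v hv huv
      have hgu0 : 0 < g u := hgpos _ ⟨by linarith [hu.1], by linarith [hu.2]⟩
      have hgv0 : 0 < g v := hgpos _ ⟨by linarith [hv.1], by linarith [hv.2]⟩
      have hguM : g u ≤ M := hup u ⟨by linarith [hu.1], by linarith [hu.2]⟩
      have hgvM : g v ≤ M := hup v ⟨by linarith [hv.1], by linarith [hv.2]⟩
      constructor
      · have hθ : 0 < x + 3*ε - u := by linarith [hu.2]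
        have hθ2 : 2*ε ≤ x + 3*ε - u := by linarith [hu.2]
        have hθΘ : x + 3*ε - u ≤ 10*ε := by linarith [hu.1]
        obtain ⟨s, hs0, hs1, hsle, hcomb⟩ : ∃ s : ℝ, 0 ≤ s ∧ s ≤ 1 ∧ s ≤ (v-u)/(2*ε) ∧
            (1-s)*u + s*(x+3*ε) = v := by
          have hne : x + 3*ε - u ≠ 0 := hθ.ne'
          refine ⟨(v-u)/(x+3*ε-u), div_nonneg (by linarith) hθ.le, ?_, ?_, ?_⟩
          · rw [div_le_one hθ]; linarith [hv.2]
          · exact div_le_div_of_nonneg_left (by linarith) (by linarith) hθ2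
          · field_simp; ring
        have hk := hkey u ⟨by linarith [hu.1], by linarith [hu.2]⟩ (x+3*ε)
          ⟨by linarith, by linarith⟩ (by linarith [hu.2]) s ⟨hs0, hs1⟩
        rw [hcomb] at hk
        have hc1 := csig_one_sub hN' hθ hθΘ hKε hs0 hs1
        rw [← hCstdef] at hc1
        have hc2 := csig_nonneg hN' hθ (hfin10 _ hθ hθΘ) hs0 hs1
        have hg3 : 0 < g (x+3*ε) := hgpos _ ⟨by linarith, by linarith⟩
        have f1 : (1 - Cst*s) * g u ≤ csig K (N-1) (1-s) (x+3*ε-u) * g u :=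
          mul_le_mul_of_nonneg_right hc1 hgu0.le
        have f2 : 0 ≤ csig K (N-1) s (x+3*ε-u) * g (x+3*ε) := mul_nonneg hc2 hg3.le
        have f3 : g u - g v ≤ Cst * s * g u := by nlinarith [hk, f1, f2]
        have f4 : Cst * s * g u ≤ Cst * s * M :=
          mul_le_mul_of_nonneg_left hguM (mul_nonneg hCst0.le hs0)
        have f5 : Cst * s * M ≤ Cst * ((v-u)/(2*ε)) * M :=
          mul_le_mul_of_nonneg_right (mul_le_mul_of_nonneg_left hsle hCst0.le) hM0.le
        have f6 : Cst * ((v-u)/(2*ε)) * M = M * Cst / (2*ε) * (v-u) := by ring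
        linarith
      · have hθ : 0 < v - (x - 3*ε) := by linarith [hv.1]
        have hθ2 : 2*ε ≤ v - (x - 3*ε) := by linarith [hv.1]
        have hθΘ : v - (x - 3*ε) ≤ 10*ε := by linarith [hv.2]
        obtain ⟨s, hs0, hs1, hsle, hcomb⟩ : ∃ s : ℝ, 0 ≤ s ∧ s ≤ 1 ∧ (1-s) ≤ (v-u)/(2*ε) ∧
            (1-s)*(x-3*ε) + s*v = u := by
          have hne : v - (x - 3*ε) ≠ 0 := hθ.ne'
          refine ⟨(u-(x-3*ε))/(v-(x-3*ε)), div_nonneg (by linarith [hu.1]) hθ.le, ?_, ?_, ?_⟩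
          · rw [div_le_one hθ]; linarith
          · have he : (1 : ℝ) - (u-(x-3*ε))/(v-(x-3*ε)) = (v-u)/(v-(x-3*ε)) := by
              field_simp; ring
            rw [he]
            exact div_le_div_of_nonneg_left (by linarith) (by linarith) hθ2
          · field_simp; ring
        have hk := hkey (x-3*ε) ⟨by linarith, by linarith⟩ v
          ⟨by linarith [hv.1], by linarith [hv.2]⟩ (by linarith [hv.1]) s ⟨hs0, hs1⟩
        rw [hcomb] at hk
        have hc1 := csig_one_sub hN' hθ hθΘ hKε (by linarith : (0:ℝ) ≤ 1 - s)
          (by linarith : 1 - s ≤ 1)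
        rw [show (1:ℝ) - (1 - s) = s by ring, ← hCstdef] at hc1
        have hc2 := csig_nonneg hN' hθ (hfin10 _ hθ hθΘ) (by linarith : (0:ℝ) ≤ 1 - s)
          (by linarith : 1 - s ≤ 1)
        have hg3 : 0 < g (x-3*ε) := hgpos _ ⟨by linarith, by linarith⟩
        have f1 : (1 - Cst*(1-s)) * g v ≤ csig K (N-1) s (v-(x-3*ε)) * g v :=
          mul_le_mul_of_nonneg_right hc1 hgv0.le
        have f2 : 0 ≤ csig K (N-1) (1-s) (v-(x-3*ε)) * g (x-3*ε) := mul_nonneg hc2 hg3.le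
        have f3 : g v - g u ≤ Cst * (1-s) * g v := by nlinarith [hk, f1, f2]
        have f4 : Cst * (1-s) * g v ≤ Cst * (1-s) * M :=
          mul_le_mul_of_nonneg_left hgvM (mul_nonneg hCst0.le (by linarith))
        have f5 : Cst * (1-s) * M ≤ Cst * ((v-u)/(2*ε)) * M :=
          mul_le_mul_of_nonneg_right (mul_le_mul_of_nonneg_left hsle hCst0.le) hM0.le
        have f6 : Cst * ((v-u)/(2*ε)) * M = M * Cst / (2*ε) * (v-u) := by ring
        linarith
    -- Lipschitz constant for the power function on [δ, M]
    set Lp : ℝ := (N-1) * max (M ^ (N-1-1)) (δ ^ (N-1-1)) with hLpdef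
    have hLp0 : 0 ≤ Lp := by
      rw [hLpdef]
      exact mul_nonneg hN'.le (le_trans (Real.rpow_nonneg hM0.le _) (le_max_left _ _))
    have hpow : ∀ y ∈ Icc δ M, ∀ z ∈ Icc δ M, |y ^ (N-1) - z ^ (N-1)| ≤ Lp * |y - z| := by
      intro y hy z hz
      have hder : ∀ w ∈ Icc δ M, HasDerivWithinAt (fun u : ℝ => u ^ (N-1))
          ((N-1) * w ^ (N-1-1)) (Icc δ M) w := fun w hw =>
        (Real.hasDerivAt_rpow_const
          (Or.inl (ne_of_gt (lt_of_lt_of_le hδpos hw.1)))).hasDerivWithinAt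
      have hbd : ∀ w ∈ Icc δ M, ‖(N-1) * w ^ (N-1-1)‖ ≤ Lp := by
        intro w hw
        have hw0 : 0 < w := lt_of_lt_of_le hδpos hw.1
        rw [Real.norm_eq_abs,
          abs_of_nonneg (mul_nonneg hN'.le (Real.rpow_nonneg hw0.le _)), hLpdef]
        refine mul_le_mul_of_nonneg_left ?_ hN'.le
        rcases le_or_gt 1 (N-1) with hc | hc
        · exact le_trans (Real.rpow_le_rpow hw0.le hw.2 (by linarith)) (le_max_left _ _)
        · exact le_trans (Real.rpow_le_rpow_of_nonpos hδpos hw.1 (by linarith)) (le_max_right _ _)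
      have h2 := (convex_Icc δ M).norm_image_sub_le_of_norm_hasDerivWithin_le hder hbd hz hy
      simpa [Real.norm_eq_abs] using h2
    clear_value Lp
    -- final assembly
    have hC0 : 0 ≤ Lp * (M * Cst / (2*ε)) :=
      mul_nonneg hLp0 (div_nonneg (mul_nonneg hM0.le hCst0.le) (by linarith))
    refine ⟨ε, hεpos, Real.toNNReal (Lp * (M * Cst / (2*ε))), LipschitzOnWith.of_dist_le_mul ?_⟩
    intro u hu v hv
    have hu' := hu.1
    have hv' := hv.1
    rw [mem_ball, Real.dist_eq, abs_lt] at hu' hv'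
    have huJ : u ∈ Icc (x-ε) (x+ε) := ⟨by linarith [hu'.1], by linarith [hu'.2]⟩
    have hvJ : v ∈ Icc (x-ε) (x+ε) := ⟨by linarith [hv'.1], by linarith [hv'.2]⟩
    rw [Real.dist_eq, Real.dist_eq, Real.coe_toNNReal _ hC0]
    have hgJ : ∀ w ∈ Icc (x-ε) (x+ε), g w ∈ Icc δ M := fun w hw =>
      ⟨hlow w ⟨by linarith [hw.1], by linarith [hw.2]⟩,
       hup w ⟨by linarith [hw.1], by linarith [hw.2]⟩⟩
    have hhu : h u = g u ^ (N-1) :=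
      (hgh u (hIccI u ⟨by linarith [huJ.1], by linarith [huJ.2]⟩)).symm
    have hhv : h v = g v ^ (N-1) :=
      (hgh v (hIccI v ⟨by linarith [hvJ.1], by linarith [hvJ.2]⟩)).symm
    rw [hhu, hhv]
    have h1 := hpow (g u) (hgJ u huJ) (g v) (hgJ v hvJ)
    have h2 : |g u - g v| ≤ M * Cst / (2*ε) * |u - v| := by
      rcases lt_trichotomy u v with hlt | heq | hlt
      · have hsl := hslope u huJ v hvJ hlt
        rw [show |u-v| = v - u by rw [abs_sub_comm]; exact abs_of_pos (by linarith)]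
        exact abs_sub_le_iff.mpr ⟨hsl.1, hsl.2⟩
      · subst heq; simp
      · have hsl := hslope v hvJ u huJ hlt
        rw [show |u-v| = u - v from abs_of_pos (by linarith), abs_sub_comm (g u) (g v)]
        exact abs_sub_le_iff.mpr ⟨hsl.1, hsl.2⟩
    calc |g u ^ (N-1) - g v ^ (N-1)| ≤ Lp * |g u - g v| := h1
      _ ≤ Lp * (M * Cst / (2*ε) * |u - v|) := mul_le_mul_of_nonneg_left h2 hLp0
      _ = Lp * (M * Cst / (2*ε)) * |u - v| := by ring

end CDMMS
end
end

section
/- Let K ∈ ℝ, N ∈ (1,∞), D > 0 and let h ∈ C²((0,D)) with h > 0 on (0,D). Then h satisfies, for all 0 < t₀ < t₁ < D and all s ∈ [0,1], the weak (K,N)-concavity inequality h((1−s)t₀ + s t₁)^{1/(N−1)} ≥ σ_{K,N−1}^{(1−s)}(t₁−t₀)·h(t₀)^{1/(N−1)} + σ_{K,N−1}^{(s)}(t₁−t₀)·h(t₁)^{1/(N−1)} if and only if the differential inequality (h^{1/(N−1)})'' + (K/(N−1))·h^{1/(N−1)} ≤ 0 holds on (0,D). -/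
noncomputable section

open MeasureTheory Set Filter Metric Topology ENNReal NNReal

namespace CDMMS

variable {X : Type*} [MetricSpace X]

variable [MeasurableSpace X]

/-! ### Auxiliary lemmas for `weak_concavity_iff_ode` -/

private lemma mp_aux {a b : ℝ} (hab : a < b) (e u e' u' : ℝ → ℝ)
    (he : ∀ x ∈ Icc a b, HasDerivAt e (e' x) x)
    (hu : ∀ x ∈ Icc a b, HasDerivAt u (u' x) x)
    (he'c : ContinuousOn e' (Icc a b)) (hu'c : ContinuousOn u' (Icc a b))
    (hsec : ∀ x ∈ Ioo a b, ∃ e'' u'', HasDerivAt e' e'' x ∧ HasDerivAt u' u'' x ∧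
      u x * e'' - u'' * e x ≤ 0)
    (hupos : ∀ x ∈ Icc a b, 0 < u x)
    (hea : e a = 0) (heb : e b = 0) :
    ∀ x ∈ Icc a b, 0 ≤ e x := by
  set W : ℝ → ℝ := fun x => u x * e' x - u' x * e x with hWdef
  have hec : ContinuousOn e (Icc a b) := fun x hx => ((he x hx).continuousAt).continuousWithinAt
  have huc : ContinuousOn u (Icc a b) := fun x hx => ((hu x hx).continuousAt).continuousWithinAt
  have hWc : ContinuousOn W (Icc a b) := (huc.mul he'c).sub (hu'c.mul hec)
  have hWanti : AntitoneOn W (Icc a b) := by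
    apply antitoneOn_of_deriv_nonpos (convex_Icc a b) hWc
    · intro x hx
      rw [interior_Icc] at hx
      obtain ⟨e'', u'', h1, h2, h3⟩ := hsec x hx
      have hx' : x ∈ Icc a b := Ioo_subset_Icc_self hx
      exact (((hu x hx').mul h1).sub (h2.mul (he x hx'))).differentiableAt.differentiableWithinAt
    · intro x hx
      rw [interior_Icc] at hx
      obtain ⟨e'', u'', h1, h2, h3⟩ := hsec x hx
      have hx' : x ∈ Icc a b := Ioo_subset_Icc_self hx
      have hWd : HasDerivAt W (u' x * e' x + u x * e'' - (u'' * e x + u' x * e' x)) x :=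
        ((hu x hx').mul h1).sub (h2.mul (he x hx'))
      rw [hWd.deriv]
      linarith
  by_contra hcon
  push_neg at hcon
  obtain ⟨x₀, hx₀, hex₀⟩ := hcon
  have hx₀a : a < x₀ := by
    rcases hx₀.1.eq_or_lt with h | h
    · exfalso; rw [← h, hea] at hex₀; exact lt_irrefl 0 hex₀
    · exact h
  have hx₀b : x₀ < b := by
    rcases hx₀.2.eq_or_lt with h | h
    · exfalso; rw [h, heb] at hex₀; exact lt_irrefl 0 hex₀
    · exact h
  set v : ℝ → ℝ := fun x => e x / u x with hvdef
  have hv : ∀ x ∈ Icc a b, HasDerivAt v (W x / (u x) ^ 2) x := by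
    intro x hx
    have h := (he x hx).div (hu x hx) (ne_of_gt (hupos x hx))
    refine h.congr_deriv (Eq.symm ?_)
    rw [hWdef]; ring
  have hvc : ContinuousOn v (Icc a b) := fun x hx => ((hv x hx).continuousAt).continuousWithinAt
  have hva : v a = 0 := by simp [hvdef, hea]
  have hvb : v b = 0 := by simp [hvdef, heb]
  have hvx₀ : v x₀ < 0 := div_neg_of_neg_of_pos hex₀ (hupos x₀ hx₀)
  obtain ⟨p, hp, hpW⟩ := exists_hasDerivAt_eq_slope v (fun x => W x / (u x) ^ 2) hx₀a
    (hvc.mono (Icc_subset_Icc le_rfl hx₀.2))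
    (fun x hx => hv x ⟨le_of_lt hx.1, le_trans (le_of_lt hx.2) hx₀.2⟩)
  obtain ⟨q, hq, hqW⟩ := exists_hasDerivAt_eq_slope v (fun x => W x / (u x) ^ 2) hx₀b
    (hvc.mono (Icc_subset_Icc hx₀.1 le_rfl))
    (fun x hx => hv x ⟨le_trans hx₀.1 (le_of_lt hx.1), le_of_lt hx.2⟩)
  have hplt : W p / (u p) ^ 2 < 0 := by
    rw [hpW, hva]
    apply div_neg_of_neg_of_pos
    · simpa using hvx₀
    · linarith [hp.1]
  have hqgt : 0 < W q / (u q) ^ 2 := by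
    rw [hqW, hvb]
    apply div_pos
    · simpa using neg_pos.2 hvx₀
    · linarith [hq.2]
  have hpmem : p ∈ Icc a b := ⟨le_of_lt hp.1, le_trans (le_of_lt hp.2) hx₀.2⟩
  have hqmem : q ∈ Icc a b := ⟨le_trans hx₀.1 (le_of_lt hq.1), le_of_lt hq.2⟩
  have hup2 : (0:ℝ) < (u p) ^ 2 := pow_pos (hupos p hpmem) 2
  have huq2 : (0:ℝ) < (u q) ^ 2 := pow_pos (hupos q hqmem) 2
  have hWp : W p < 0 := by
    have := mul_neg_of_neg_of_pos hplt hup2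
    rwa [div_mul_cancel₀ _ (ne_of_gt hup2)] at this
  have hWq : 0 < W q := by
    have := mul_pos hqgt huq2
    rwa [div_mul_cancel₀ _ (ne_of_gt huq2)] at this
  have := hWanti hpmem hqmem (le_of_lt (lt_trans hp.2 hq.1))
  linarith

private lemma sturm_aux {a b lam : ℝ} (hab : a < b) (g g' : ℝ → ℝ)
    (hg : ∀ x ∈ Icc a b, HasDerivAt g (g' x) x)
    (hg'c : ContinuousOn g' (Icc a b))
    (hg'' : ∀ x ∈ Ioo a b, ∃ g'', HasDerivAt g' g'' x ∧ g'' + lam * g x ≤ 0)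
    (hgpos : ∀ x ∈ Icc a b, 0 < g x) :
    lam * (b - a) ^ 2 < Real.pi ^ 2 := by
  by_contra hcon
  push_neg at hcon
  have hba : 0 < b - a := sub_pos.2 hab
  set m := Real.pi / (b - a) with hmdef
  have hmpos : 0 < m := div_pos Real.pi_pos hba
  have hm2 : m ^ 2 ≤ lam := by
    rw [hmdef, div_pow, div_le_iff₀ (by positivity)]
    nlinarith
  have hmb : m * (b - a) = Real.pi := div_mul_cancel₀ _ (ne_of_gt hba)
  set w : ℝ → ℝ := fun x => Real.sin (m * (x - a)) with hwdef
  set w' : ℝ → ℝ := fun x => m * Real.cos (m * (x - a)) with hw'def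
  have hlin : ∀ x : ℝ, HasDerivAt (fun y : ℝ => m * (y - a)) m x := by
    intro x
    simpa using ((hasDerivAt_id x).sub_const a).const_mul m
  have hwd : ∀ x, HasDerivAt w (w' x) x := by
    intro x
    simpa [hw'def, mul_comm, Function.comp_def] using (Real.hasDerivAt_sin (m * (x - a))).comp x (hlin x)
  have hw'd : ∀ x, HasDerivAt w' (-(m ^ 2) * w x) x := by
    intro x
    have := ((Real.hasDerivAt_cos (m * (x - a))).comp x (hlin x)).const_mul m
    refine this.congr_deriv (Eq.symm ?_)
    simp [hwdef]; ring
  have hwnn : ∀ x ∈ Icc a b, 0 ≤ w x := by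
    intro x hx
    apply Real.sin_nonneg_of_nonneg_of_le_pi
    · exact mul_nonneg (le_of_lt hmpos) (by linarith [hx.1])
    · rw [← hmb]
      exact mul_le_mul_of_nonneg_left (by linarith [hx.2]) (le_of_lt hmpos)
  set W : ℝ → ℝ := fun x => g x * w' x - g' x * w x with hWdef
  have hWc : ContinuousOn W (Icc a b) := by
    apply ContinuousOn.sub
    · exact ContinuousOn.mul (fun x hx => ((hg x hx).continuousAt).continuousWithinAt)
        (fun x hx => ((hw'd x).continuousAt).continuousWithinAt)
    · exact hg'c.mul (fun x hx => ((hwd x).continuousAt).continuousWithinAt)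
  have hWmono : MonotoneOn W (Icc a b) := by
    apply monotoneOn_of_deriv_nonneg (convex_Icc a b) hWc
    · intro x hx
      rw [interior_Icc] at hx
      obtain ⟨g'', h1, h2⟩ := hg'' x hx
      have hx' : x ∈ Icc a b := Ioo_subset_Icc_self hx
      exact (((hg x hx').mul (hw'd x)).sub
        (h1.mul (hwd x))).differentiableAt.differentiableWithinAt
    · intro x hx
      rw [interior_Icc] at hx
      obtain ⟨g'', h1, h2⟩ := hg'' x hx
      have hx' : x ∈ Icc a b := Ioo_subset_Icc_self hx
      have hWd : HasDerivAt W
          (g' x * w' x + g x * (-(m ^ 2) * w x) - (g'' * w x + g' x * w' x)) x :=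
        ((hg x hx').mul (hw'd x)).sub (h1.mul (hwd x))
      rw [hWd.deriv]
      have hw0 : 0 ≤ w x := hwnn x hx'
      have hg0 : 0 < g x := hgpos x hx'
      nlinarith [mul_nonneg hw0 (le_of_lt hg0)]
  have hWa : W a = m * g a := by
    simp [hWdef, hwdef, hw'def, mul_comm]
  have hWb : W b = -(m * g b) := by
    simp only [hWdef, hwdef, hw'def, hmb, Real.sin_pi, Real.cos_pi]
    ring
  have := hWmono (left_mem_Icc.2 (le_of_lt hab)) (right_mem_Icc.2 (le_of_lt hab)) (le_of_lt hab)
  rw [hWa, hWb] at this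
  nlinarith [hgpos a (left_mem_Icc.2 (le_of_lt hab)), hgpos b (right_mem_Icc.2 (le_of_lt hab))]

private lemma interp_aux {t₀ t₁ lam : ℝ} (hlt : t₀ < t₁) (g dg ddg U U' Ψ Ψ' : ℝ → ℝ)
    (hg : ∀ x ∈ Icc t₀ t₁, HasDerivAt g (dg x) x)
    (hdg : ∀ x ∈ Ioo t₀ t₁, HasDerivAt dg (ddg x) x)
    (hdgc : ContinuousOn dg (Icc t₀ t₁))
    (hode : ∀ x ∈ Ioo t₀ t₁, ddg x + lam * g x ≤ 0)
    (hU : ∀ x, HasDerivAt U (U' x) x)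
    (hU' : ∀ x ∈ Ioo t₀ t₁, HasDerivAt U' (-lam * U x) x)
    (hU'c : Continuous U')
    (hUpos : ∀ x ∈ Icc t₀ t₁, 0 < U x)
    (hΨ : ∀ x, HasDerivAt Ψ (Ψ' x) x)
    (hΨ' : ∀ x ∈ Ioo t₀ t₁, HasDerivAt Ψ' (-lam * Ψ x) x)
    (hΨ'c : Continuous Ψ')
    (hΨt₀ : Ψ t₀ = g t₀) (hΨt₁ : Ψ t₁ = g t₁) :
    ∀ x ∈ Icc t₀ t₁, Ψ x ≤ g x := by
  have key := mp_aux hlt (fun x => g x - Ψ x) U (fun x => dg x - Ψ' x) U'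
    (fun x hx => (hg x hx).sub (hΨ x))
    (fun x _ => hU x)
    (hdgc.sub (hΨ'c.continuousOn))
    (hU'c.continuousOn)
    (fun x hx => by
      refine ⟨ddg x - (-lam * Ψ x), -lam * U x,
        (hdg x hx).sub (hΨ' x hx), hU' x hx, ?_⟩
      have h1 := hode x hx
      have h2 := hUpos x (Ioo_subset_Icc_self hx)
      have h3 : U x * (ddg x + lam * g x) ≤ 0 :=
        mul_nonpos_of_nonneg_of_nonpos (le_of_lt h2) h1
      show U x * (ddg x - -lam * Ψ x) - -lam * U x * (g x - Ψ x) ≤ 0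
      nlinarith [h3])
    hUpos
    (show g t₀ - Ψ t₀ = 0 by rw [hΨt₀]; ring)
    (show g t₁ - Ψ t₁ = 0 by rw [hΨt₁]; ring)
  intro x hx
  have hk : 0 ≤ g x - Ψ x := key x hx
  linarith

private lemma hasDerivAt_sin_lin (a b x : ℝ) :
    HasDerivAt (fun y => Real.sin (a * y + b)) (a * Real.cos (a * x + b)) x := by
  have h1 : HasDerivAt (fun y : ℝ => a * y + b) a x := by
    simpa using ((hasDerivAt_id x).const_mul a).add_const b
  simpa [mul_comm, Function.comp_def] using (Real.hasDerivAt_sin (a * x + b)).comp x h1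

private lemma hasDerivAt_sin_lin2 (a b x : ℝ) :
    HasDerivAt (fun y => a * Real.cos (a * y + b)) (-(a ^ 2) * Real.sin (a * x + b)) x := by
  have h1 : HasDerivAt (fun y : ℝ => a * y + b) a x := by
    simpa using ((hasDerivAt_id x).const_mul a).add_const b
  have := ((Real.hasDerivAt_cos (a * x + b)).comp x h1).const_mul a
  refine this.congr_deriv (Eq.symm ?_)
  ring

private lemma hasDerivAt_sinh_lin (a b x : ℝ) :
    HasDerivAt (fun y => Real.sinh (a * y + b)) (a * Real.cosh (a * x + b)) x := by
  have h1 : HasDerivAt (fun y : ℝ => a * y + b) a x := by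
    simpa using ((hasDerivAt_id x).const_mul a).add_const b
  simpa [mul_comm, Function.comp_def] using (Real.hasDerivAt_sinh (a * x + b)).comp x h1

private lemma hasDerivAt_sinh_lin2 (a b x : ℝ) :
    HasDerivAt (fun y => a * Real.cosh (a * y + b)) (a ^ 2 * Real.sinh (a * x + b)) x := by
  have h1 : HasDerivAt (fun y : ℝ => a * y + b) a x := by
    simpa using ((hasDerivAt_id x).const_mul a).add_const b
  have := ((Real.hasDerivAt_cosh (a * x + b)).comp x h1).const_mul a
  refine this.congr_deriv (Eq.symm ?_)
  ring

private lemma hasDerivAt_cosh_lin (a b x : ℝ) :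
    HasDerivAt (fun y => Real.cosh (a * y + b)) (a * Real.sinh (a * x + b)) x := by
  have h1 : HasDerivAt (fun y : ℝ => a * y + b) a x := by
    simpa using ((hasDerivAt_id x).const_mul a).add_const b
  simpa [mul_comm, Function.comp_def] using (Real.hasDerivAt_cosh (a * x + b)).comp x h1

private lemma hasDerivAt_cosh_lin2 (a b x : ℝ) :
    HasDerivAt (fun y => a * Real.sinh (a * y + b)) (a ^ 2 * Real.cosh (a * x + b)) x := by
  have h1 : HasDerivAt (fun y : ℝ => a * y + b) a x := by
    simpa using ((hasDerivAt_id x).const_mul a).add_const b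
  have := ((Real.hasDerivAt_sinh (a * x + b)).comp x h1).const_mul a
  refine this.congr_deriv (Eq.symm ?_)
  ring

private lemma tendsto_add_nhdsGT {t : ℝ} :
    Tendsto (fun ε : ℝ => t + ε) (𝓝[>] (0:ℝ)) (𝓝[≠] t) := by
  apply tendsto_nhdsWithin_of_tendsto_nhds_of_eventually_within
  · have : Tendsto (fun ε : ℝ => t + ε) (𝓝 (0:ℝ)) (𝓝 t) := by
      simpa using (continuous_add_left t).tendsto (0:ℝ)
    exact this.mono_left nhdsWithin_le_nhds
  · filter_upwards [self_mem_nhdsWithin] with ε (hε : ε ∈ Ioi (0:ℝ))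
    simp only [mem_compl_iff, mem_singleton_iff]
    intro h
    have : ε = 0 := by linarith [h]
    exact absurd this (ne_of_gt hε)

private lemma tendsto_sub_nhdsGT {t : ℝ} :
    Tendsto (fun ε : ℝ => t - ε) (𝓝[>] (0:ℝ)) (𝓝[≠] t) := by
  apply tendsto_nhdsWithin_of_tendsto_nhds_of_eventually_within
  · have : Tendsto (fun ε : ℝ => t - ε) (𝓝 (0:ℝ)) (𝓝 t) := by
      simpa using (continuous_sub_left t).tendsto (0:ℝ)
    exact this.mono_left nhdsWithin_le_nhds
  · filter_upwards [self_mem_nhdsWithin] with ε (hε : ε ∈ Ioi (0:ℝ))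
    simp only [mem_compl_iff, mem_singleton_iff]
    intro h
    have : ε = 0 := by linarith [h]
    exact absurd this (ne_of_gt hε)

private lemma tendsto_scale_nhdsNE {c : ℝ} (hc : c ≠ 0) :
    Tendsto (fun ε : ℝ => ε * c / 2) (𝓝[>] (0:ℝ)) (𝓝[≠] (0:ℝ)) := by
  apply tendsto_nhdsWithin_of_tendsto_nhds_of_eventually_within
  · have : Tendsto (fun ε : ℝ => ε * c / 2) (𝓝 (0:ℝ)) (𝓝 (0 * c / 2)) :=
      ((continuous_id.mul continuous_const).div_const 2).tendsto 0
    simpa using this.mono_left nhdsWithin_le_nhds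
  · filter_upwards [self_mem_nhdsWithin] with ε (hε : ε ∈ Ioi (0:ℝ))
    simp only [mem_compl_iff, mem_singleton_iff]
    intro h
    rcases mul_eq_zero.1 (by linarith : ε * c = 0) with h1 | h2
    · exact absurd h1 (ne_of_gt hε)
    · exact hc h2

private lemma sin_div_lim : Tendsto (fun y : ℝ => Real.sin y / y) (𝓝[≠] (0:ℝ)) (𝓝 1) := by
  have h := hasDerivAt_iff_tendsto_slope.mp (Real.hasDerivAt_sin 0)
  rw [Real.cos_zero] at h
  refine h.congr fun y => ?_
  rw [slope_def_field]
  simp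

private lemma sinh_div_lim : Tendsto (fun y : ℝ => Real.sinh y / y) (𝓝[≠] (0:ℝ)) (𝓝 1) := by
  have h := hasDerivAt_iff_tendsto_slope.mp (Real.hasDerivAt_sinh 0)
  rw [Real.cosh_zero] at h
  refine h.congr fun y => ?_
  rw [slope_def_field]
  simp

private lemma cos_lim {w : ℝ} (hw : 0 < w) :
    Tendsto (fun ε : ℝ => (2 * Real.cos (ε * w) - 2) / ε ^ 2) (𝓝[>] (0:ℝ)) (𝓝 (-w ^ 2)) := by
  have h1 : Tendsto (fun ε : ℝ => Real.sin (ε * w / 2) / (ε * w / 2)) (𝓝[>] (0:ℝ)) (𝓝 1) :=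
    sin_div_lim.comp (tendsto_scale_nhdsNE (ne_of_gt hw))
  have h2 : Tendsto (fun ε : ℝ => -w ^ 2 * (Real.sin (ε * w / 2) / (ε * w / 2)) ^ 2)
      (𝓝[>] (0:ℝ)) (𝓝 (-w ^ 2 * 1 ^ 2)) := (h1.pow 2).const_mul _
  rw [show -w ^ 2 * (1:ℝ) ^ 2 = -w ^ 2 by ring] at h2
  refine h2.congr' ?_
  filter_upwards [self_mem_nhdsWithin] with ε (hε : ε ∈ Ioi (0:ℝ))
  have hε0 : (ε:ℝ) ≠ 0 := ne_of_gt hε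
  have key : Real.cos (ε * w) = 1 - 2 * Real.sin (ε * w / 2) ^ 2 := by
    rw [show ε * w = 2 * (ε * w / 2) by ring, Real.cos_two_mul, Real.cos_sq']
    ring
  rw [key]
  field_simp
  ring

private lemma cosh_lim {w : ℝ} (hw : 0 < w) :
    Tendsto (fun ε : ℝ => (2 * Real.cosh (ε * w) - 2) / ε ^ 2) (𝓝[>] (0:ℝ)) (𝓝 (w ^ 2)) := by
  have h1 : Tendsto (fun ε : ℝ => Real.sinh (ε * w / 2) / (ε * w / 2)) (𝓝[>] (0:ℝ)) (𝓝 1) :=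
    sinh_div_lim.comp (tendsto_scale_nhdsNE (ne_of_gt hw))
  have h2 : Tendsto (fun ε : ℝ => w ^ 2 * (Real.sinh (ε * w / 2) / (ε * w / 2)) ^ 2)
      (𝓝[>] (0:ℝ)) (𝓝 (w ^ 2 * 1 ^ 2)) := (h1.pow 2).const_mul _
  rw [show w ^ 2 * (1:ℝ) ^ 2 = w ^ 2 by ring] at h2
  refine h2.congr' ?_
  filter_upwards [self_mem_nhdsWithin] with ε (hε : ε ∈ Ioi (0:ℝ))
  have hε0 : (ε:ℝ) ≠ 0 := ne_of_gt hε
  have key : Real.cosh (ε * w) = 1 + 2 * Real.sinh (ε * w / 2) ^ 2 := by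
    rw [show ε * w = 2 * (ε * w / 2) by ring, Real.cosh_two_mul, Real.cosh_sq]
    ring
  rw [key]
  field_simp
  ring

private lemma symm_second {g : ℝ → ℝ} {t L : ℝ}
    (hg1 : ∀ᶠ x in 𝓝 t, HasDerivAt g (deriv g x) x)
    (hg2 : HasDerivAt (deriv g) L t) :
    Tendsto (fun ε => (g (t + ε) + g (t - ε) - 2 * g t) / ε ^ 2) (𝓝[>] (0:ℝ)) (𝓝 L) := by
  obtain ⟨δ, hδ, hball⟩ := Metric.eventually_nhds_iff.mp hg1
  have hev : ∀ᶠ ε in 𝓝[>] (0:ℝ), ε ∈ Ioo (0:ℝ) δ :=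
    eventually_of_mem (Ioo_mem_nhdsGT_of_mem ⟨le_refl 0, hδ⟩) fun x hx => hx
  have key : ∀ ε ∈ Ioo (0:ℝ) δ,
      HasDerivAt (fun ε => g (t + ε) + g (t - ε) - 2 * g t)
        (deriv g (t + ε) + -deriv g (t - ε)) ε := by
    intro ε hε
    have h1 : HasDerivAt (fun y : ℝ => t + y) 1 ε := by
      simpa using (hasDerivAt_id ε).const_add t
    have h2 : HasDerivAt (fun y : ℝ => t - y) (-1) ε := by
      simpa using (hasDerivAt_id ε).const_sub t
    have hp : HasDerivAt (fun y => g (t + y)) (deriv g (t + ε)) ε := by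
      have hd : dist (t + ε) t < δ := by
        rw [Real.dist_eq, show t + ε - t = ε by ring, abs_of_pos hε.1]
        exact hε.2
      have := (hball hd).comp ε h1
      simpa [Function.comp_def] using this
    have hm : HasDerivAt (fun y => g (t - y)) (-deriv g (t - ε)) ε := by
      have hd : dist (t - ε) t < δ := by
        rw [Real.dist_eq, show t - ε - t = -ε by ring, abs_neg, abs_of_pos hε.1]
        exact hε.2
      have := (hball hd).comp ε h2
      simpa [mul_comm, Function.comp_def] using this
    simpa using (hp.add hm).sub_const (2 * g t)
  apply HasDerivAt.lhopital_zero_nhdsGT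
    (f' := fun ε => deriv g (t + ε) + -deriv g (t - ε)) (g' := fun ε => 2 * ε)
  · exact hev.mono fun ε hε => key ε hε
  · exact Eventually.of_forall fun ε => by
      simpa [mul_comm] using hasDerivAt_pow 2 ε
  · filter_upwards [self_mem_nhdsWithin] with ε (hε : ε ∈ Ioi (0:ℝ))
    have : (0:ℝ) < ε := hε
    positivity
  · have hc : ContinuousAt g t := (hg1.self_of_nhds).continuousAt
    have h1 : Tendsto (fun ε : ℝ => g (t + ε)) (𝓝 (0:ℝ)) (𝓝 (g t)) := by
      have : Tendsto (fun ε : ℝ => t + ε) (𝓝 (0:ℝ)) (𝓝 t) := by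
        simpa using (continuous_add_left t).tendsto (0:ℝ)
      exact hc.tendsto.comp this
    have h2 : Tendsto (fun ε : ℝ => g (t - ε)) (𝓝 (0:ℝ)) (𝓝 (g t)) := by
      have : Tendsto (fun ε : ℝ => t - ε) (𝓝 (0:ℝ)) (𝓝 t) := by
        simpa using (continuous_sub_left t).tendsto (0:ℝ)
      exact hc.tendsto.comp this
    have := ((h1.add h2).sub_const (2 * g t)).mono_left (nhdsWithin_le_nhds (s := Ioi (0:ℝ)))
    simpa [show g t + g t - 2 * g t = 0 by ring] using this
  · have : Tendsto (fun ε : ℝ => ε ^ 2) (𝓝 (0:ℝ)) (𝓝 ((0:ℝ) ^ 2)) :=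
      (continuous_pow 2).tendsto 0
    simpa using this.mono_left (nhdsWithin_le_nhds (s := Ioi (0:ℝ)))
  · have hs := hasDerivAt_iff_tendsto_slope.mp hg2
    have hA : Tendsto (fun ε : ℝ => _root_.slope (deriv g) t (t + ε)) (𝓝[>] (0:ℝ)) (𝓝 L) :=
      hs.comp tendsto_add_nhdsGT
    have hB : Tendsto (fun ε : ℝ => _root_.slope (deriv g) t (t - ε)) (𝓝[>] (0:ℝ)) (𝓝 L) :=
      hs.comp tendsto_sub_nhdsGT
    have hC : Tendsto (fun ε : ℝ =>
        (_root_.slope (deriv g) t (t + ε) + _root_.slope (deriv g) t (t - ε)) / 2) (𝓝[>] (0:ℝ))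
        (𝓝 ((L + L) / 2)) := (hA.add hB).div_const 2
    rw [show (L + L) / 2 = L by ring] at hC
    refine hC.congr' ?_
    filter_upwards [self_mem_nhdsWithin] with ε (hε : ε ∈ Ioi (0:ℝ))
    have hε0 : (ε:ℝ) ≠ 0 := ne_of_gt hε
    rw [slope_def_field, slope_def_field]
    rw [show t + ε - t = ε by ring, show t - ε - t = -ε by ring]
    rw [div_neg, ← neg_div, ← add_div, div_div]
    congr 1
    · ring
    · ring

private lemma sigmaC_pos_eval {K N t θ : ℝ} (h1 : 0 < K * θ ^ 2) (h2 : K * θ ^ 2 < N * Real.pi ^ 2) :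
    sigmaC K N t θ =
      ENNReal.ofReal (Real.sin (t * θ * Real.sqrt (K / N)) / Real.sin (θ * Real.sqrt (K / N))) := by
  rw [sigmaC, if_neg (not_le.2 h2), if_pos h1]

private lemma sigmaC_zero_eval {K N t θ : ℝ} (hN : 0 < N) (h0 : K * θ ^ 2 = 0) :
    sigmaC K N t θ = ENNReal.ofReal t := by
  rw [sigmaC, if_neg, if_neg (by rw [h0]; exact lt_irrefl 0), if_pos h0]
  rw [h0]
  push_neg
  positivity

private lemma sigmaC_neg_eval {K N t θ : ℝ} (hN : 0 < N) (hneg : K * θ ^ 2 < 0) :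
    sigmaC K N t θ =
      ENNReal.ofReal
        (Real.sinh (t * θ * Real.sqrt (-K / N)) / Real.sinh (θ * Real.sqrt (-K / N))) := by
  rw [sigmaC, if_neg, if_neg (not_lt.2 (le_of_lt hneg)), if_neg (ne_of_lt hneg),
    if_neg (ne_of_gt hN), if_pos hN]
  push_neg
  calc K * θ ^ 2 < 0 := hneg
    _ < N * Real.pi ^ 2 := by positivity

set_option maxHeartbeats 1600000 in
/-- For positive `C²` densities, the weak `(K,N)`-concavity inequality is equivalent to
the differential inequality `(h^{1/(N-1)})'' + K/(N-1) h^{1/(N-1)} ≤ 0` on `(0,D)`. -/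
theorem weak_concavity_iff_ode (K N D : ℝ) (hN : 1 < N) (hD : 0 < D)
    (h : ℝ → ℝ) (hsm : ContDiffOn ℝ 2 h (Set.Ioo 0 D))
    (hpos : ∀ t ∈ Set.Ioo (0:ℝ) D, 0 < h t) :
    SynthCD K N h (Set.Ioo 0 D) ↔
      ∀ t ∈ Set.Ioo (0:ℝ) D,
        deriv (deriv fun s => h s ^ ((1:ℝ) / (N - 1))) t
          + K / (N - 1) * h t ^ ((1:ℝ) / (N - 1)) ≤ 0 := by
  have hN1 : (0:ℝ) < N - 1 := by linarith
  set g : ℝ → ℝ := fun s => h s ^ ((1:ℝ) / (N - 1)) with hgdef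
  have hgt : ∀ y : ℝ, h y ^ ((1:ℝ) / (N - 1)) = g y := fun _ => rfl
  have hgC : ContDiffOn ℝ 2 g (Ioo 0 D) := fun x hx =>
    (hsm x hx).rpow_const_of_ne (ne_of_gt (hpos x hx))
  have hopen : IsOpen (Ioo (0:ℝ) D) := isOpen_Ioo
  have hg1 : ∀ t ∈ Ioo (0:ℝ) D, HasDerivAt g (deriv g t) t := fun t ht =>
    ((hgC.differentiableOn (by norm_num)).differentiableAt (hopen.mem_nhds ht)).hasDerivAt
  have hdgC : ContDiffOn ℝ 1 (deriv g) (Ioo 0 D) :=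
    hgC.deriv_of_isOpen hopen (by norm_num)
  have hg2 : ∀ t ∈ Ioo (0:ℝ) D, HasDerivAt (deriv g) (deriv (deriv g) t) t := fun t ht =>
    ((hdgC.differentiableOn one_ne_zero).differentiableAt (hopen.mem_nhds ht)).hasDerivAt
  have hdgc : ContinuousOn (deriv g) (Ioo 0 D) := hdgC.continuousOn
  have hgpos : ∀ t ∈ Ioo (0:ℝ) D, 0 < g t := fun t ht =>
    Real.rpow_pos_of_pos (hpos t ht) _
  constructor
  · -- SynthCD → ODE
    intro hsyn t ht
    rw [hgt t]
    have hQ : Tendsto (fun ε => (g (t + ε) + g (t - ε) - 2 * g t) / ε ^ 2) (𝓝[>] (0:ℝ))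
        (𝓝 (deriv (deriv g) t)) :=
      symm_second (eventually_of_mem (hopen.mem_nhds ht) fun y hy => hg1 y hy) (hg2 t ht)
    rcases lt_trichotomy K 0 with hK | hK | hK
    · -- K < 0
      set ω := Real.sqrt (-K / (N - 1)) with hω
      have hmKpos : (0:ℝ) < -K / (N - 1) := div_pos (by linarith) hN1
      have hωpos : 0 < ω := Real.sqrt_pos.2 hmKpos
      have hω2 : ω ^ 2 = -K / (N - 1) := Real.sq_sqrt (le_of_lt hmKpos)
      set δ := min t (D - t) with hδdef
      have hδpos : 0 < δ := lt_min ht.1 (sub_pos.2 ht.2)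
      have hineq : ∀ ε ∈ Ioo (0:ℝ) δ, (g (t + ε) + g (t - ε) - 2 * g t) / ε ^ 2 ≤
          ((2 * Real.cosh (ε * ω) - 2) / ε ^ 2) * g t := by
        intro ε hε
        have hε0 := hε.1
        have hεt : ε < t := lt_of_lt_of_le hε.2 (min_le_left _ _)
        have hεD : ε < D - t := lt_of_lt_of_le hε.2 (min_le_right _ _)
        have hm1 : t - ε ∈ Ioo (0:ℝ) D := ⟨by linarith, by linarith [ht.2]⟩
        have hm2 : t + ε ∈ Ioo (0:ℝ) D := ⟨by linarith [ht.1], by linarith⟩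
        have happ := hsyn (t - ε) hm1 (t + ε) hm2 (by linarith) (1/2)
          ⟨by norm_num, by norm_num⟩
        rw [show (1 - (1:ℝ)/2) = 1/2 by norm_num, show t + ε - (t - ε) = 2 * ε by ring,
            show (1/2 : ℝ) * (t - ε) + 1/2 * (t + ε) = t by ring] at happ
        have hcond : K * (2 * ε) ^ 2 < 0 := mul_neg_of_neg_of_pos hK (pow_pos (by linarith) 2)
        rw [sigmaC_neg_eval hN1 hcond, ← hω] at happ
        rw [show (1/2 : ℝ) * (2 * ε) * ω = ε * ω by ring,
            show (2 * ε) * ω = 2 * (ε * ω) by ring] at happ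
        simp only [hgt] at happ
        have hshpos : 0 < Real.sinh (ε * ω) := Real.sinh_pos_iff.2 (mul_pos hε0 hωpos)
        have hchpos : 0 < Real.cosh (ε * ω) := Real.cosh_pos _
        have hσ : Real.sinh (ε * ω) / Real.sinh (2 * (ε * ω)) =
            1 / (2 * Real.cosh (ε * ω)) := by
          rw [Real.sinh_two_mul]
          field_simp
        have hσnn : 0 ≤ Real.sinh (ε * ω) / Real.sinh (2 * (ε * ω)) := by
          rw [hσ]; positivity
        rw [← ENNReal.ofReal_mul hσnn, ← ENNReal.ofReal_mul hσnn, ← ENNReal.ofReal_add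
          (mul_nonneg hσnn (le_of_lt (hgpos _ hm1)))
          (mul_nonneg hσnn (le_of_lt (hgpos _ hm2)))] at happ
        have hreal := (ENNReal.ofReal_le_ofReal_iff (le_of_lt (hgpos t ht))).mp happ
        rw [hσ] at hreal
        have h2c : 0 < 2 * Real.cosh (ε * ω) := by positivity
        have hkey : g (t + ε) + g (t - ε) - 2 * g t ≤ (2 * Real.cosh (ε * ω) - 2) * g t := by
          have hmul := mul_le_mul_of_nonneg_left hreal (le_of_lt h2c)
          have hid : 2 * Real.cosh (ε * ω) * (1 / (2 * Real.cosh (ε * ω)) * g (t - ε) +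
              1 / (2 * Real.cosh (ε * ω)) * g (t + ε)) = g (t - ε) + g (t + ε) := by
            field_simp
          rw [hid] at hmul
          nlinarith [hmul]
        calc (g (t + ε) + g (t - ε) - 2 * g t) / ε ^ 2
            ≤ ((2 * Real.cosh (ε * ω) - 2) * g t) / ε ^ 2 :=
              div_le_div_of_nonneg_right hkey (sq_nonneg ε)
          _ = ((2 * Real.cosh (ε * ω) - 2) / ε ^ 2) * g t := by ring
      have hR : Tendsto (fun ε => ((2 * Real.cosh (ε * ω) - 2) / ε ^ 2) * g t) (𝓝[>] (0:ℝ))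
          (𝓝 (ω ^ 2 * g t)) := (cosh_lim hωpos).mul_const _
      have hle : deriv (deriv g) t ≤ ω ^ 2 * g t :=
        le_of_tendsto_of_tendsto hQ hR (eventually_of_mem
          (Ioo_mem_nhdsGT_of_mem ⟨le_refl (0:ℝ), hδpos⟩) hineq)
      have hval : ω ^ 2 * g t = -(K / (N - 1)) * g t := by rw [hω2]; ring
      linarith [hle, hval.le, hval.ge]
    · -- K = 0
      subst hK
      have hδpos : 0 < min t (D - t) := lt_min ht.1 (sub_pos.2 ht.2)
      have hineq : ∀ ε ∈ Ioo (0:ℝ) (min t (D - t)),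
          (g (t + ε) + g (t - ε) - 2 * g t) / ε ^ 2 ≤ (0:ℝ) := by
        intro ε hε
        have hε0 := hε.1
        have hεt : ε < t := lt_of_lt_of_le hε.2 (min_le_left _ _)
        have hεD : ε < D - t := lt_of_lt_of_le hε.2 (min_le_right _ _)
        have hm1 : t - ε ∈ Ioo (0:ℝ) D := ⟨by linarith, by linarith [ht.2]⟩
        have hm2 : t + ε ∈ Ioo (0:ℝ) D := ⟨by linarith [ht.1], by linarith⟩
        have happ := hsyn (t - ε) hm1 (t + ε) hm2 (by linarith) (1/2)
          ⟨by norm_num, by norm_num⟩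
        rw [show (1 - (1:ℝ)/2) = 1/2 by norm_num, show t + ε - (t - ε) = 2 * ε by ring,
            show (1/2 : ℝ) * (t - ε) + 1/2 * (t + ε) = t by ring] at happ
        rw [sigmaC_zero_eval hN1 (by ring)] at happ
        simp only [hgt] at happ
        have h12 : (0:ℝ) ≤ 1/2 := by norm_num
        rw [← ENNReal.ofReal_mul h12, ← ENNReal.ofReal_mul h12, ← ENNReal.ofReal_add
          (mul_nonneg h12 (le_of_lt (hgpos _ hm1)))
          (mul_nonneg h12 (le_of_lt (hgpos _ hm2)))] at happ
        have hreal := (ENNReal.ofReal_le_ofReal_iff (le_of_lt (hgpos t ht))).mp happ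
        have hnum : g (t + ε) + g (t - ε) - 2 * g t ≤ 0 := by linarith
        exact div_nonpos_iff.2 (Or.inr ⟨hnum, sq_nonneg ε⟩)
      have hR : Tendsto (fun _ : ℝ => (0:ℝ)) (𝓝[>] (0:ℝ)) (𝓝 0) := tendsto_const_nhds
      have hle : deriv (deriv g) t ≤ 0 :=
        le_of_tendsto_of_tendsto hQ hR (eventually_of_mem
          (Ioo_mem_nhdsGT_of_mem ⟨le_refl (0:ℝ), hδpos⟩) hineq)
      have : (0:ℝ) / (N - 1) * g t = 0 := by
        rw [zero_div]; ring
      linarith [this.le, this.ge]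
    · -- K > 0
      set ω := Real.sqrt (K / (N - 1)) with hω
      have hKpos : (0:ℝ) < K / (N - 1) := div_pos hK hN1
      have hωpos : 0 < ω := Real.sqrt_pos.2 hKpos
      have hω2 : ω ^ 2 = K / (N - 1) := Real.sq_sqrt (le_of_lt hKpos)
      set δ := min (min t (D - t)) (Real.pi / 2 / ω) with hδdef
      have hδpos : 0 < δ :=
        lt_min (lt_min ht.1 (sub_pos.2 ht.2))
          (div_pos (div_pos Real.pi_pos two_pos) hωpos)
      have hineq : ∀ ε ∈ Ioo (0:ℝ) δ, (g (t + ε) + g (t - ε) - 2 * g t) / ε ^ 2 ≤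
          ((2 * Real.cos (ε * ω) - 2) / ε ^ 2) * g t := by
        intro ε hε
        have hε0 := hε.1
        have hεt : ε < t := lt_of_lt_of_le hε.2 (le_trans (min_le_left _ _) (min_le_left _ _))
        have hεD : ε < D - t :=
          lt_of_lt_of_le hε.2 (le_trans (min_le_left _ _) (min_le_right _ _))
        have hεω : ε * ω < Real.pi / 2 := by
          have hh := lt_of_lt_of_le hε.2 (min_le_right _ _)
          calc ε * ω < (Real.pi / 2 / ω) * ω := mul_lt_mul_of_pos_right hh hωpos
            _ = Real.pi / 2 := div_mul_cancel₀ _ (ne_of_gt hωpos)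
        have hm1 : t - ε ∈ Ioo (0:ℝ) D := ⟨by linarith, by linarith [ht.2]⟩
        have hm2 : t + ε ∈ Ioo (0:ℝ) D := ⟨by linarith [ht.1], by linarith⟩
        have happ := hsyn (t - ε) hm1 (t + ε) hm2 (by linarith) (1/2)
          ⟨by norm_num, by norm_num⟩
        rw [show (1 - (1:ℝ)/2) = 1/2 by norm_num, show t + ε - (t - ε) = 2 * ε by ring,
            show (1/2 : ℝ) * (t - ε) + 1/2 * (t + ε) = t by ring] at happ
        have hcond1 : 0 < K * (2 * ε) ^ 2 := mul_pos hK (pow_pos (by linarith) 2)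
        have hcond2 : K * (2 * ε) ^ 2 < (N - 1) * Real.pi ^ 2 := by
          have hK' : K = ω ^ 2 * (N - 1) := by rw [hω2]; field_simp
          have hεωpos : 0 < ε * ω := mul_pos hε0 hωpos
          have h4 : 4 * (ε * ω) ^ 2 < Real.pi ^ 2 := by
            nlinarith [mul_pos (show (0:ℝ) < Real.pi / 2 - ε * ω by linarith)
              (show (0:ℝ) < Real.pi / 2 + ε * ω by linarith [Real.pi_pos])]
          calc K * (2 * ε) ^ 2 = (N - 1) * (4 * (ε * ω) ^ 2) := by rw [hK']; ring
            _ < (N - 1) * Real.pi ^ 2 := mul_lt_mul_of_pos_left h4 hN1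
        rw [sigmaC_pos_eval hcond1 hcond2, ← hω] at happ
        rw [show (1/2 : ℝ) * (2 * ε) * ω = ε * ω by ring,
            show (2 * ε) * ω = 2 * (ε * ω) by ring] at happ
        simp only [hgt] at happ
        have hsinpos : 0 < Real.sin (ε * ω) :=
          Real.sin_pos_of_pos_of_lt_pi (mul_pos hε0 hωpos) (by linarith [Real.pi_pos])
        have hcospos : 0 < Real.cos (ε * ω) :=
          Real.cos_pos_of_mem_Ioo ⟨by nlinarith [Real.pi_pos, mul_pos hε0 hωpos], hεω⟩
        have hσ : Real.sin (ε * ω) / Real.sin (2 * (ε * ω)) =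
            1 / (2 * Real.cos (ε * ω)) := by
          rw [Real.sin_two_mul]
          field_simp
        have hσnn : 0 ≤ Real.sin (ε * ω) / Real.sin (2 * (ε * ω)) := by
          rw [hσ]; positivity
        rw [← ENNReal.ofReal_mul hσnn, ← ENNReal.ofReal_mul hσnn, ← ENNReal.ofReal_add
          (mul_nonneg hσnn (le_of_lt (hgpos _ hm1)))
          (mul_nonneg hσnn (le_of_lt (hgpos _ hm2)))] at happ
        have hreal := (ENNReal.ofReal_le_ofReal_iff (le_of_lt (hgpos t ht))).mp happ
        rw [hσ] at hreal
        have h2c : 0 < 2 * Real.cos (ε * ω) := by positivity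
        have hkey : g (t + ε) + g (t - ε) - 2 * g t ≤ (2 * Real.cos (ε * ω) - 2) * g t := by
          have hmul := mul_le_mul_of_nonneg_left hreal (le_of_lt h2c)
          have hid : 2 * Real.cos (ε * ω) * (1 / (2 * Real.cos (ε * ω)) * g (t - ε) +
              1 / (2 * Real.cos (ε * ω)) * g (t + ε)) = g (t - ε) + g (t + ε) := by
            field_simp
          rw [hid] at hmul
          nlinarith [hmul]
        calc (g (t + ε) + g (t - ε) - 2 * g t) / ε ^ 2
            ≤ ((2 * Real.cos (ε * ω) - 2) * g t) / ε ^ 2 :=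
              div_le_div_of_nonneg_right hkey (sq_nonneg ε)
          _ = ((2 * Real.cos (ε * ω) - 2) / ε ^ 2) * g t := by ring
      have hR : Tendsto (fun ε => ((2 * Real.cos (ε * ω) - 2) / ε ^ 2) * g t) (𝓝[>] (0:ℝ))
          (𝓝 (-ω ^ 2 * g t)) := (cos_lim hωpos).mul_const _
      have hle : deriv (deriv g) t ≤ -ω ^ 2 * g t :=
        le_of_tendsto_of_tendsto hQ hR (eventually_of_mem
          (Ioo_mem_nhdsGT_of_mem ⟨le_refl (0:ℝ), hδpos⟩) hineq)
      have hval : -ω ^ 2 * g t = -(K / (N - 1)) * g t := by rw [hω2]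
      linarith [hle, hval.le, hval.ge]
  · -- ODE → SynthCD
    intro hode
    have hode' : ∀ x ∈ Ioo (0:ℝ) D, deriv (deriv g) x + K / (N - 1) * g x ≤ 0 := by
      intro x hx
      have hh := hode x hx
      rwa [hgt x] at hh
    intro t₀ ht₀ t₁ ht₁ hlt s hs
    have hsub : Icc t₀ t₁ ⊆ Ioo (0:ℝ) D := fun y hy =>
      ⟨lt_of_lt_of_le ht₀.1 hy.1, lt_of_le_of_lt hy.2 ht₁.2⟩
    have hs0 := hs.1
    have hs1 := hs.2
    have hθ : 0 < t₁ - t₀ := sub_pos.2 hlt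
    have hxmem : (1 - s) * t₀ + s * t₁ ∈ Icc t₀ t₁ := ⟨by nlinarith, by nlinarith⟩
    have hgIcc : ∀ y ∈ Icc t₀ t₁, HasDerivAt g (deriv g y) y := fun y hy => hg1 y (hsub hy)
    have hdgIoo : ∀ y ∈ Ioo t₀ t₁, HasDerivAt (deriv g) (deriv (deriv g) y) y :=
      fun y hy => hg2 y (hsub (Ioo_subset_Icc_self hy))
    have hdgcI : ContinuousOn (deriv g) (Icc t₀ t₁) := hdgc.mono hsub
    have hodeI : ∀ y ∈ Ioo t₀ t₁, deriv (deriv g) y + K / (N - 1) * g y ≤ 0 :=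
      fun y hy => hode' y (hsub (Ioo_subset_Icc_self hy))
    have hgposI : ∀ y ∈ Icc t₀ t₁, 0 < g y := fun y hy => hgpos y (hsub hy)
    have hgt₀ : 0 < g t₀ := hgposI t₀ (left_mem_Icc.2 (le_of_lt hlt))
    have hgt₁ : 0 < g t₁ := hgposI t₁ (right_mem_Icc.2 (le_of_lt hlt))
    rcases lt_trichotomy K 0 with hK | hK | hK
    · -- K < 0
      set ω := Real.sqrt (-K / (N - 1)) with hω
      have hmKpos : (0:ℝ) < -K / (N - 1) := div_pos (by linarith) hN1
      have hωpos : 0 < ω := Real.sqrt_pos.2 hmKpos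
      have hω2 : ω ^ 2 = -K / (N - 1) := Real.sq_sqrt (le_of_lt hmKpos)
      have hKneg : K * (t₁ - t₀) ^ 2 < 0 := mul_neg_of_neg_of_pos hK (pow_pos hθ 2)
      have hlamω : -(K / (N - 1)) = ω ^ 2 := by rw [hω2]; ring
      have hsh : 0 < Real.sinh (ω * (t₁ - t₀)) := Real.sinh_pos_iff.2 (mul_pos hωpos hθ)
      set U : ℝ → ℝ := fun y => Real.cosh (ω * y + -(ω * (t₀ + t₁) / 2)) with hUdef
      set U' : ℝ → ℝ := fun y => ω * Real.sinh (ω * y + -(ω * (t₀ + t₁) / 2)) with hU'def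
      set Ψ : ℝ → ℝ := fun y =>
        (g t₀ * Real.sinh (-ω * y + ω * t₁) + g t₁ * Real.sinh (ω * y + -(ω * t₀))) /
          Real.sinh (ω * (t₁ - t₀)) with hΨdef
      set Ψ' : ℝ → ℝ := fun y =>
        (g t₀ * (-ω * Real.cosh (-ω * y + ω * t₁)) + g t₁ * (ω * Real.cosh (ω * y + -(ω * t₀)))) /
          Real.sinh (ω * (t₁ - t₀)) with hΨ'def
      have hU : ∀ y, HasDerivAt U (U' y) y := fun y => hasDerivAt_cosh_lin ω _ y
      have hU' : ∀ y ∈ Ioo t₀ t₁, HasDerivAt U' (-(K / (N - 1)) * U y) y := by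
        intro y _
        have := hasDerivAt_cosh_lin2 ω (-(ω * (t₀ + t₁) / 2)) y
        refine this.congr_deriv (Eq.symm ?_)
        rw [hlamω]
      have hU'c : Continuous U' := by
        apply Continuous.mul continuous_const
        exact Real.continuous_sinh.comp ((continuous_const.mul continuous_id).add
          continuous_const)
      have hUpos : ∀ y ∈ Icc t₀ t₁, 0 < U y := fun y _ => Real.cosh_pos _
      have hΨ : ∀ y, HasDerivAt Ψ (Ψ' y) y := by
        intro y
        have h1 := (hasDerivAt_sinh_lin (-ω) (ω * t₁) y).const_mul (g t₀)
        have h2 := (hasDerivAt_sinh_lin ω (-(ω * t₀)) y).const_mul (g t₁)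
        exact (h1.add h2).div_const _
      have hΨ' : ∀ y ∈ Ioo t₀ t₁, HasDerivAt Ψ' (-(K / (N - 1)) * Ψ y) y := by
        intro y _
        have h1 := (hasDerivAt_sinh_lin2 (-ω) (ω * t₁) y).const_mul (g t₀)
        have h2 := (hasDerivAt_sinh_lin2 ω (-(ω * t₀)) y).const_mul (g t₁)
        have h3 := (h1.add h2).div_const (Real.sinh (ω * (t₁ - t₀)))
        refine h3.congr_deriv (Eq.symm ?_)
        rw [hlamω, hΨdef]
        field_simp
      have hΨ'c : Continuous Ψ' := by
        apply Continuous.div_const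
        apply Continuous.add
        · exact continuous_const.mul (continuous_const.mul (Real.continuous_cosh.comp
            ((continuous_const.mul continuous_id).add continuous_const)))
        · exact continuous_const.mul (continuous_const.mul (Real.continuous_cosh.comp
            ((continuous_const.mul continuous_id).add continuous_const)))
      have hΨt₀ : Ψ t₀ = g t₀ := by
        rw [hΨdef]
        show (g t₀ * Real.sinh (-ω * t₀ + ω * t₁) + g t₁ * Real.sinh (ω * t₀ + -(ω * t₀))) /
          Real.sinh (ω * (t₁ - t₀)) = g t₀
        rw [show -ω * t₀ + ω * t₁ = ω * (t₁ - t₀) by ring,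
            show ω * t₀ + -(ω * t₀) = 0 by ring, Real.sinh_zero]
        field_simp
        ring
      have hΨt₁ : Ψ t₁ = g t₁ := by
        rw [hΨdef]
        show (g t₀ * Real.sinh (-ω * t₁ + ω * t₁) + g t₁ * Real.sinh (ω * t₁ + -(ω * t₀))) /
          Real.sinh (ω * (t₁ - t₀)) = g t₁
        rw [show -ω * t₁ + ω * t₁ = 0 by ring,
            show ω * t₁ + -(ω * t₀) = ω * (t₁ - t₀) by ring, Real.sinh_zero]
        field_simp
        ring
      have hfin := interp_aux hlt g (deriv g) (deriv (deriv g)) U U' Ψ Ψ'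
        hgIcc hdgIoo hdgcI hodeI hU hU' hU'c hUpos hΨ hΨ' hΨ'c hΨt₀ hΨt₁
        ((1 - s) * t₀ + s * t₁) hxmem
      rw [sigmaC_neg_eval hN1 hKneg, sigmaC_neg_eval hN1 hKneg, ← hω]
      have hσ₁nn : 0 ≤ Real.sinh ((1 - s) * (t₁ - t₀) * ω) / Real.sinh ((t₁ - t₀) * ω) :=
        div_nonneg (Real.sinh_nonneg_iff.2 (mul_nonneg (mul_nonneg (by linarith)
          (le_of_lt hθ)) (le_of_lt hωpos)))
          (le_of_lt (by rw [mul_comm]; exact hsh))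
      have hσ₂nn : 0 ≤ Real.sinh (s * (t₁ - t₀) * ω) / Real.sinh ((t₁ - t₀) * ω) :=
        div_nonneg (Real.sinh_nonneg_iff.2 (mul_nonneg (mul_nonneg hs0
          (le_of_lt hθ)) (le_of_lt hωpos)))
          (le_of_lt (by rw [mul_comm]; exact hsh))
      rw [← ENNReal.ofReal_mul hσ₁nn, ← ENNReal.ofReal_mul hσ₂nn, ← ENNReal.ofReal_add
        (mul_nonneg hσ₁nn (le_of_lt hgt₀)) (mul_nonneg hσ₂nn (le_of_lt hgt₁))]
      apply ENNReal.ofReal_le_ofReal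
      have hid : Real.sinh ((1 - s) * (t₁ - t₀) * ω) / Real.sinh ((t₁ - t₀) * ω) * g t₀ +
          Real.sinh (s * (t₁ - t₀) * ω) / Real.sinh ((t₁ - t₀) * ω) * g t₁ =
          Ψ ((1 - s) * t₀ + s * t₁) := by
        rw [hΨdef]
        show _ = (g t₀ * Real.sinh (-ω * ((1 - s) * t₀ + s * t₁) + ω * t₁) +
          g t₁ * Real.sinh (ω * ((1 - s) * t₀ + s * t₁) + -(ω * t₀))) /
          Real.sinh (ω * (t₁ - t₀))
        rw [show -ω * ((1 - s) * t₀ + s * t₁) + ω * t₁ = (1 - s) * (t₁ - t₀) * ω by ring,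
            show ω * ((1 - s) * t₀ + s * t₁) + -(ω * t₀) = s * (t₁ - t₀) * ω by ring,
            show ω * (t₁ - t₀) = (t₁ - t₀) * ω by ring]
        field_simp
      rw [hid]
      exact hfin
    · -- K = 0
      subst hK
      have h0 : (0:ℝ) * (t₁ - t₀) ^ 2 = 0 := by ring
      set Ψ : ℝ → ℝ := fun y => (g t₀ * (-y + t₁) + g t₁ * (y + -t₀)) / (t₁ - t₀) with hΨdef
      set Ψ' : ℝ → ℝ := fun _ => (g t₀ * (-1) + g t₁ * 1) / (t₁ - t₀) with hΨ'def
      have hΨ : ∀ y, HasDerivAt Ψ (Ψ' y) y := by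
        intro y
        have h1 : HasDerivAt (fun y : ℝ => -y + t₁) (-1) y := by
          simpa using (hasDerivAt_id y).neg.add_const t₁
        have h2 : HasDerivAt (fun y : ℝ => y + -t₀) 1 y := by
          simpa using (hasDerivAt_id y).add_const (-t₀)
        exact (((h1.const_mul (g t₀)).add (h2.const_mul (g t₁))).div_const _)
      have hΨ' : ∀ y ∈ Ioo t₀ t₁, HasDerivAt Ψ' (-(0 / (N - 1)) * Ψ y) y := by
        intro y _
        have := hasDerivAt_const y ((g t₀ * (-1) + g t₁ * 1) / (t₁ - t₀))
        refine this.congr_deriv (Eq.symm ?_)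
        rw [zero_div]
        ring
      have hU : ∀ y : ℝ, HasDerivAt (fun _ : ℝ => (1:ℝ)) ((fun _ : ℝ => (0:ℝ)) y) y :=
        fun y => hasDerivAt_const y 1
      have hU' : ∀ y ∈ Ioo t₀ t₁,
          HasDerivAt (fun _ : ℝ => (0:ℝ)) (-(0 / (N - 1)) * (1:ℝ)) y := by
        intro y _
        have := hasDerivAt_const y (0:ℝ)
        refine this.congr_deriv (Eq.symm ?_)
        rw [zero_div]
        ring
      have hfin := interp_aux hlt g (deriv g) (deriv (deriv g)) (fun _ => (1:ℝ))
        (fun _ => (0:ℝ)) Ψ Ψ' hgIcc hdgIoo hdgcI hodeI hU hU' continuous_const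
        (fun y _ => one_pos) hΨ hΨ' continuous_const
        (by rw [hΨdef]
            show (g t₀ * (-t₀ + t₁) + g t₁ * (t₀ + -t₀)) / (t₁ - t₀) = g t₀
            rw [div_eq_iff (ne_of_gt hθ)]
            ring)
        (by rw [hΨdef]
            show (g t₀ * (-t₁ + t₁) + g t₁ * (t₁ + -t₀)) / (t₁ - t₀) = g t₁
            rw [div_eq_iff (ne_of_gt hθ)]
            ring)
        ((1 - s) * t₀ + s * t₁) hxmem
      rw [sigmaC_zero_eval hN1 h0, sigmaC_zero_eval hN1 h0]
      have h1s : (0:ℝ) ≤ 1 - s := by linarith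
      rw [← ENNReal.ofReal_mul h1s, ← ENNReal.ofReal_mul hs0, ← ENNReal.ofReal_add
        (mul_nonneg h1s (le_of_lt hgt₀)) (mul_nonneg hs0 (le_of_lt hgt₁))]
      apply ENNReal.ofReal_le_ofReal
      have hid : (1 - s) * g t₀ + s * g t₁ = Ψ ((1 - s) * t₀ + s * t₁) := by
        rw [hΨdef]
        show _ = (g t₀ * (-((1 - s) * t₀ + s * t₁) + t₁) +
          g t₁ * (((1 - s) * t₀ + s * t₁) + -t₀)) / (t₁ - t₀)
        rw [eq_div_iff (ne_of_gt hθ)]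
        ring
      rw [hid]
      exact hfin
    · -- K > 0
      have hlampos : 0 < K / (N - 1) := div_pos hK hN1
      have hsturm := sturm_aux hlt g (deriv g) hgIcc hdgcI
        (fun y hy => ⟨deriv (deriv g) y, hdgIoo y hy, hodeI y hy⟩) hgposI
      set ω := Real.sqrt (K / (N - 1)) with hω
      have hωpos : 0 < ω := Real.sqrt_pos.2 hlampos
      have hω2 : ω ^ 2 = K / (N - 1) := Real.sq_sqrt (le_of_lt hlampos)
      have hωθ : ω * (t₁ - t₀) < Real.pi := by
        by_contra hcon
        push_neg at hcon
        have hsq : Real.pi ^ 2 ≤ (ω * (t₁ - t₀)) ^ 2 := by nlinarith [Real.pi_pos]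
        rw [mul_pow, hω2] at hsq
        linarith [hsturm]
      have hωθpos : 0 < ω * (t₁ - t₀) := mul_pos hωpos hθ
      have hsin : 0 < Real.sin (ω * (t₁ - t₀)) :=
        Real.sin_pos_of_pos_of_lt_pi hωθpos hωθ
      have hKθ : 0 < K * (t₁ - t₀) ^ 2 := mul_pos hK (pow_pos hθ 2)
      have hKθπ : K * (t₁ - t₀) ^ 2 < (N - 1) * Real.pi ^ 2 := by
        have hKlam : K = (K / (N - 1)) * (N - 1) := by field_simp
        nlinarith [hsturm]
      set β := (Real.pi - ω * (t₁ - t₀)) / 2 with hβdef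
      have hβpos : 0 < β := by rw [hβdef]; linarith
      set U : ℝ → ℝ := fun y => Real.sin (ω * y + (β - ω * t₀)) with hUdef
      set U' : ℝ → ℝ := fun y => ω * Real.cos (ω * y + (β - ω * t₀)) with hU'def
      set Ψ : ℝ → ℝ := fun y =>
        (g t₀ * Real.sin (-ω * y + ω * t₁) + g t₁ * Real.sin (ω * y + -(ω * t₀))) /
          Real.sin (ω * (t₁ - t₀)) with hΨdef
      set Ψ' : ℝ → ℝ := fun y =>
        (g t₀ * (-ω * Real.cos (-ω * y + ω * t₁)) + g t₁ * (ω * Real.cos (ω * y + -(ω * t₀)))) /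
          Real.sin (ω * (t₁ - t₀)) with hΨ'def
      have hU : ∀ y, HasDerivAt U (U' y) y := fun y => hasDerivAt_sin_lin ω _ y
      have hU' : ∀ y ∈ Ioo t₀ t₁, HasDerivAt U' (-(K / (N - 1)) * U y) y := by
        intro y _
        have := hasDerivAt_sin_lin2 ω (β - ω * t₀) y
        refine this.congr_deriv (Eq.symm ?_)
        rw [hUdef]
        show -(K / (N - 1)) * Real.sin (ω * y + (β - ω * t₀)) = _
        rw [← hω2]
      have hU'c : Continuous U' := by
        apply Continuous.mul continuous_const
        exact Real.continuous_cos.comp ((continuous_const.mul continuous_id).add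
          continuous_const)
      have hUpos : ∀ y ∈ Icc t₀ t₁, 0 < U y := by
        intro y hy
        apply Real.sin_pos_of_pos_of_lt_pi
        · have : ω * t₀ ≤ ω * y := mul_le_mul_of_nonneg_left hy.1 (le_of_lt hωpos)
          have hb2 : β - ω * t₀ + ω * t₀ ≤ ω * y + (β - ω * t₀) := by linarith
          nlinarith [hβpos]
        · have : ω * y ≤ ω * t₁ := mul_le_mul_of_nonneg_left hy.2 (le_of_lt hωpos)
          have : ω * y + (β - ω * t₀) ≤ ω * (t₁ - t₀) + β := by linarith
          rw [hβdef] at this ⊢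
          linarith
      have hΨ : ∀ y, HasDerivAt Ψ (Ψ' y) y := by
        intro y
        have h1 := (hasDerivAt_sin_lin (-ω) (ω * t₁) y).const_mul (g t₀)
        have h2 := (hasDerivAt_sin_lin ω (-(ω * t₀)) y).const_mul (g t₁)
        exact (h1.add h2).div_const _
      have hΨ' : ∀ y ∈ Ioo t₀ t₁, HasDerivAt Ψ' (-(K / (N - 1)) * Ψ y) y := by
        intro y _
        have h1 := (hasDerivAt_sin_lin2 (-ω) (ω * t₁) y).const_mul (g t₀)
        have h2 := (hasDerivAt_sin_lin2 ω (-(ω * t₀)) y).const_mul (g t₁)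
        have h3 := (h1.add h2).div_const (Real.sin (ω * (t₁ - t₀)))
        refine h3.congr_deriv (Eq.symm ?_)
        rw [show -(K / (N - 1)) = -(ω ^ 2) by rw [hω2], hΨdef]
        field_simp
        ring
      have hΨ'c : Continuous Ψ' := by
        apply Continuous.div_const
        apply Continuous.add
        · exact continuous_const.mul (continuous_const.mul (Real.continuous_cos.comp
            ((continuous_const.mul continuous_id).add continuous_const)))
        · exact continuous_const.mul (continuous_const.mul (Real.continuous_cos.comp
            ((continuous_const.mul continuous_id).add continuous_const)))
      have hΨt₀ : Ψ t₀ = g t₀ := by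
        rw [hΨdef]
        show (g t₀ * Real.sin (-ω * t₀ + ω * t₁) + g t₁ * Real.sin (ω * t₀ + -(ω * t₀))) /
          Real.sin (ω * (t₁ - t₀)) = g t₀
        rw [show -ω * t₀ + ω * t₁ = ω * (t₁ - t₀) by ring,
            show ω * t₀ + -(ω * t₀) = 0 by ring, Real.sin_zero]
        field_simp
        ring
      have hΨt₁ : Ψ t₁ = g t₁ := by
        rw [hΨdef]
        show (g t₀ * Real.sin (-ω * t₁ + ω * t₁) + g t₁ * Real.sin (ω * t₁ + -(ω * t₀))) /
          Real.sin (ω * (t₁ - t₀)) = g t₁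
        rw [show -ω * t₁ + ω * t₁ = 0 by ring,
            show ω * t₁ + -(ω * t₀) = ω * (t₁ - t₀) by ring, Real.sin_zero]
        field_simp
        ring
      have hfin := interp_aux hlt g (deriv g) (deriv (deriv g)) U U' Ψ Ψ'
        hgIcc hdgIoo hdgcI hodeI hU hU' hU'c hUpos hΨ hΨ' hΨ'c hΨt₀ hΨt₁
        ((1 - s) * t₀ + s * t₁) hxmem
      rw [sigmaC_pos_eval hKθ hKθπ, sigmaC_pos_eval hKθ hKθπ, ← hω]
      have hsin' : 0 < Real.sin ((t₁ - t₀) * ω) := by rw [mul_comm]; exact hsin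
      have harg₁ : 0 ≤ Real.sin ((1 - s) * (t₁ - t₀) * ω) := by
        apply Real.sin_nonneg_of_nonneg_of_le_pi
        · exact mul_nonneg (mul_nonneg (by linarith) (le_of_lt hθ)) (le_of_lt hωpos)
        · nlinarith [hωθ, mul_nonneg (mul_nonneg hs0 (le_of_lt hθ)) (le_of_lt hωpos)]
      have harg₂ : 0 ≤ Real.sin (s * (t₁ - t₀) * ω) := by
        apply Real.sin_nonneg_of_nonneg_of_le_pi
        · exact mul_nonneg (mul_nonneg hs0 (le_of_lt hθ)) (le_of_lt hωpos)
        · nlinarith [hωθ, mul_nonneg (mul_nonneg (show (0:ℝ) ≤ 1 - s by linarith)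
            (le_of_lt hθ)) (le_of_lt hωpos)]
      have hσ₁nn : 0 ≤ Real.sin ((1 - s) * (t₁ - t₀) * ω) / Real.sin ((t₁ - t₀) * ω) :=
        div_nonneg harg₁ (le_of_lt hsin')
      have hσ₂nn : 0 ≤ Real.sin (s * (t₁ - t₀) * ω) / Real.sin ((t₁ - t₀) * ω) :=
        div_nonneg harg₂ (le_of_lt hsin')
      rw [← ENNReal.ofReal_mul hσ₁nn, ← ENNReal.ofReal_mul hσ₂nn, ← ENNReal.ofReal_add
        (mul_nonneg hσ₁nn (le_of_lt hgt₀)) (mul_nonneg hσ₂nn (le_of_lt hgt₁))]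
      apply ENNReal.ofReal_le_ofReal
      have hid : Real.sin ((1 - s) * (t₁ - t₀) * ω) / Real.sin ((t₁ - t₀) * ω) * g t₀ +
          Real.sin (s * (t₁ - t₀) * ω) / Real.sin ((t₁ - t₀) * ω) * g t₁ =
          Ψ ((1 - s) * t₀ + s * t₁) := by
        rw [hΨdef]
        show _ = (g t₀ * Real.sin (-ω * ((1 - s) * t₀ + s * t₁) + ω * t₁) +
          g t₁ * Real.sin (ω * ((1 - s) * t₀ + s * t₁) + -(ω * t₀))) /
          Real.sin (ω * (t₁ - t₀))
        rw [show -ω * ((1 - s) * t₀ + s * t₁) + ω * t₁ = (1 - s) * (t₁ - t₀) * ω by ring,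
            show ω * ((1 - s) * t₀ + s * t₁) + -(ω * t₀) = s * (t₁ - t₀) * ω by ring,
            show ω * (t₁ - t₀) = (t₁ - t₀) * ω by ring]
        field_simp
      rw [hid]
      exact hfin

end CDMMS
end
end
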